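/- arXiv:2208.00947 — 9 statements merged into one kernel-verified Lean document; each statement's English description precedes it below -/
import Mathlib

section
/- For real parameters α < 3/2 and exponent 1/2, the integral ∫₀^δ ∫₀^δ min(√ω₁, √ω₃) · ω₁^{-α} · ω₃^{-α} · |ω₁ - ω₃| dω₃ dω₁ is finite for every δ > 0. -/
open MeasureTheory Set

theorem aux_bound (α a b : ℝ) (ha : 0 < a) (hb : 0 < b) :
    min (Real.sqrt a) (Real.sqrt b) * a ^ (-α) * b ^ (-α) * |a - b|
      ≤ a ^ (1/2 - α) * b ^ (1 - α) + a ^ (1 - α) * b ^ (1/2 - α) := by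
  rcases le_total a b with hab | hab
  · calc min (Real.sqrt a) (Real.sqrt b) * a ^ (-α) * b ^ (-α) * |a - b|
        = a ^ (1/2 : ℝ) * a ^ (-α) * b ^ (-α) * (b - a) := by
          rw [min_eq_left (Real.sqrt_le_sqrt hab), Real.sqrt_eq_rpow, abs_sub_comm,
            abs_of_nonneg (sub_nonneg.2 hab)]
      _ ≤ a ^ (1/2 : ℝ) * a ^ (-α) * b ^ (-α) * b := by
          have h0 : (0:ℝ) ≤ a ^ (1/2 : ℝ) * a ^ (-α) * b ^ (-α) := by positivity
          exact mul_le_mul_of_nonneg_left (by linarith) h0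
      _ = a ^ (1/2 - α) * b ^ (1 - α) := by
          rw [show (1/2 : ℝ) - α = 1/2 + -α by ring, Real.rpow_add ha,
            show (1 : ℝ) - α = -α + 1 by ring, Real.rpow_add hb, Real.rpow_one]
          ring
      _ ≤ _ := le_add_of_nonneg_right (by positivity)
  · calc min (Real.sqrt a) (Real.sqrt b) * a ^ (-α) * b ^ (-α) * |a - b|
        = b ^ (1/2 : ℝ) * a ^ (-α) * b ^ (-α) * (a - b) := by
          rw [min_eq_right (Real.sqrt_le_sqrt hab), Real.sqrt_eq_rpow,
            abs_of_nonneg (sub_nonneg.2 hab)]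
      _ ≤ b ^ (1/2 : ℝ) * a ^ (-α) * b ^ (-α) * a := by
          have h0 : (0:ℝ) ≤ b ^ (1/2 : ℝ) * a ^ (-α) * b ^ (-α) := by positivity
          exact mul_le_mul_of_nonneg_left (by linarith) h0
      _ = a ^ (1 - α) * b ^ (1/2 - α) := by
          rw [show (1/2 : ℝ) - α = 1/2 + -α by ring, Real.rpow_add hb,
            show (1 : ℝ) - α = -α + 1 by ring, Real.rpow_add ha, Real.rpow_one]
          ring
      _ ≤ _ := le_add_of_nonneg_left (by positivity)

/-- For α < 3/2, the integral ∫₀^δ ∫₀^δ min(√ω₁,√ω₃) ω₁^{-α} ω₃^{-α} |ω₁-ω₃| dω₃ dω₁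
is finite for every δ > 0. -/
theorem stmt_0 (α δ : ℝ) (hα : α < 3/2) (hδ : 0 < δ) :
    IntegrableOn
      (fun p : ℝ × ℝ =>
        min (Real.sqrt p.1) (Real.sqrt p.2) * p.1 ^ (-α) * p.2 ^ (-α) * |p.1 - p.2|)
      (Ioo (0:ℝ) δ ×ˢ Ioo (0:ℝ) δ) := by
  have key : ∀ s : ℝ, -1 < s → IntegrableOn (fun x : ℝ => x ^ s) (Ioo 0 δ) := fun s hs =>
    (intervalIntegral.integrableOn_Ioo_rpow_iff hδ).mpr hs
  have h1 := key (1/2 - α) (by linarith)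
  have h2 := key (1 - α) (by linarith)
  have hg : IntegrableOn
      (fun p : ℝ × ℝ => p.1 ^ (1/2 - α) * p.2 ^ (1 - α) + p.1 ^ (1 - α) * p.2 ^ (1/2 - α))
      (Ioo (0:ℝ) δ ×ˢ Ioo (0:ℝ) δ) := by
    have A := h1.mul_prod h2
    have B := h2.mul_prod h1
    rw [Measure.prod_restrict] at A B
    rw [IntegrableOn, Measure.volume_eq_prod]
    exact A.add B
  have hmeas : AEStronglyMeasurable
      (fun p : ℝ × ℝ =>
        min (Real.sqrt p.1) (Real.sqrt p.2) * p.1 ^ (-α) * p.2 ^ (-α) * |p.1 - p.2|)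
      (volume.restrict (Ioo (0:ℝ) δ ×ˢ Ioo (0:ℝ) δ)) := by
    apply Measurable.aestronglyMeasurable
    have hr : ∀ s : ℝ, Measurable fun x : ℝ => x ^ s := fun s => by measurability
    exact ((((Real.continuous_sqrt.measurable.comp measurable_fst).min
        (Real.continuous_sqrt.measurable.comp measurable_snd)).mul
        ((hr (-α)).comp measurable_fst)).mul
        ((hr (-α)).comp measurable_snd)).mul (measurable_fst.sub measurable_snd).abs
  refine hg.mono' hmeas ?_
  filter_upwards [ae_restrict_mem (measurableSet_Ioo.prod measurableSet_Ioo)] with p hp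
  obtain ⟨⟨ha0, _⟩, hb0, _⟩ := hp
  rw [Real.norm_eq_abs, abs_of_nonneg]
  · exact aux_bound α p.1 p.2 ha0 hb0
  · have h1 : (0:ℝ) ≤ min (Real.sqrt p.1) (Real.sqrt p.2) :=
      le_min (Real.sqrt_nonneg _) (Real.sqrt_nonneg _)
    positivity
end

section
/- Let α be a real number and consider on the region Δ₂ = {(ω₃,ω₄) : ω₃ ≥ ω₁, 0 ≤ ω₄ ≤ ω₁} the change of variables (ω₃', ω₄') = (ω₁/ω₃)·(ω₁, ω₃+ω₄−ω₁). Then the Jacobian determinant of (ω₃,ω₄) ↦ (ω₃',ω₄') equals −ω₃'³/ω₁³, the image region is Δ₁ = {(ω₃,ω₄) : ω₃+ω₄ ≥ ω₁, 0 ≤ ω₃ ≤ ω₁, 0 ≤ ω₄ ≤ ω₁}, and the new variables satisfy ω₁ + ω₂' = ω₃' + ω₄' where ω₂' = (ω₁/ω₃)·ω₄. -/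
open Set

lemma det_two_aux (L : ℝ × ℝ →L[ℝ] ℝ × ℝ) :
    ContinuousLinearMap.det L =
      (L (1,0)).1 * (L (0,1)).2 - (L (0,1)).1 * (L (1,0)).2 := by
  rw [ContinuousLinearMap.det, ← LinearMap.det_toMatrix (Module.Basis.finTwoProd ℝ),
    Matrix.det_fin_two]
  simp [LinearMap.toMatrix_apply, Module.Basis.finTwoProd]

/-- The Zakharov conformal change of variables mapping Δ₂ onto Δ₁:
Jacobian determinant, image region, and conservation of momentum. -/
theorem stmt_3 (ω₁ : ℝ) (hω₁ : 0 < ω₁)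
    (T : ℝ × ℝ → ℝ × ℝ)
    (hT : T = fun p => ((ω₁ / p.1) * ω₁, (ω₁ / p.1) * (p.1 + p.2 - ω₁)))
    (Δ₂ : Set (ℝ × ℝ)) (hΔ₂ : Δ₂ = {p | ω₁ ≤ p.1 ∧ 0 ≤ p.2 ∧ p.2 ≤ ω₁})
    (Δ₁ : Set (ℝ × ℝ))
    (hΔ₁ : Δ₁ = {p | ω₁ ≤ p.1 + p.2 ∧ 0 ≤ p.1 ∧ p.1 ≤ ω₁ ∧ 0 ≤ p.2 ∧ p.2 ≤ ω₁}) :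
    (∀ p ∈ Δ₂, ContinuousLinearMap.det (fderiv ℝ T p) = -((T p).1) ^ 3 / ω₁ ^ 3) ∧
    T '' Δ₂ = Δ₁ ∩ {p | 0 < p.1} ∧
    (∀ p ∈ Δ₂, ω₁ + (ω₁ / p.1) * p.2 = (T p).1 + (T p).2) := by
  subst hT hΔ₂ hΔ₁
  refine ⟨?_, ?_, ?_⟩
  · -- Jacobian determinant
    rintro p ⟨hp1, -, -⟩
    have hx : p.1 ≠ 0 := by nlinarith
    have hinvq : HasFDerivAt (fun q : ℝ × ℝ => (q.1)⁻¹)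
        ((-ContinuousLinearMap.mulLeftRight ℝ ℝ p.1⁻¹ p.1⁻¹).comp
          (ContinuousLinearMap.fst ℝ ℝ ℝ)) p :=
      (hasFDerivAt_inv' hx).comp p hasFDerivAt_fst
    have hsum : HasFDerivAt (fun q : ℝ × ℝ => q.1 + q.2 - ω₁)
        (ContinuousLinearMap.fst ℝ ℝ ℝ + ContinuousLinearMap.snd ℝ ℝ ℝ) p :=
      (hasFDerivAt_fst.add hasFDerivAt_snd).sub_const ω₁
    have h1 := (hinvq.const_mul ω₁).mul_const ω₁
    have h2 := (hinvq.const_mul ω₁).mul hsum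
    have hTd : HasFDerivAt (fun q : ℝ × ℝ => (ω₁ * q.1⁻¹ * ω₁, ω₁ * q.1⁻¹ * (q.1 + q.2 - ω₁))) _ p :=
      h1.prodMk h2
    have heq : (fun p : ℝ × ℝ => ((ω₁ / p.1) * ω₁, (ω₁ / p.1) * (p.1 + p.2 - ω₁)))
        = fun q : ℝ × ℝ => (ω₁ * q.1⁻¹ * ω₁, ω₁ * q.1⁻¹ * (q.1 + q.2 - ω₁)) := by
      funext q; simp [div_eq_mul_inv]
    rw [heq, hTd.fderiv, det_two_aux]
    simp [ContinuousLinearMap.prod_apply]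
    field_simp
  · -- image
    ext ⟨a, b⟩
    constructor
    · rintro ⟨⟨x, y⟩, ⟨hx1, hy0, hy1⟩, heq⟩
      rw [Prod.mk.injEq] at heq
      obtain ⟨rfl, rfl⟩ := heq
      simp only [Set.mem_inter_iff, Set.mem_setOf_eq]
      have hx0 : (0:ℝ) < x := lt_of_lt_of_le hω₁ hx1
      have k1 : (ω₁ / x) * ω₁ + (ω₁ / x) * (x + y - ω₁) - ω₁ = ω₁ * y / x := by
        field_simp; ring
      have k1' : (0:ℝ) ≤ ω₁ * y / x := div_nonneg (by nlinarith) hx0.le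
      have k3 : ω₁ - (ω₁ / x) * ω₁ = ω₁ * (x - ω₁) / x := by field_simp
      have k3' : (0:ℝ) ≤ ω₁ * (x - ω₁) / x := div_nonneg (by nlinarith) hx0.le
      have k4 : (ω₁ / x) * (x + y - ω₁) = ω₁ * (x + y - ω₁) / x := by ring
      have k4' : (0:ℝ) ≤ ω₁ * (x + y - ω₁) / x := div_nonneg (by nlinarith) hx0.le
      have k5 : ω₁ - (ω₁ / x) * (x + y - ω₁) = ω₁ * (ω₁ - y) / x := by field_simp; ring
      have k5' : (0:ℝ) ≤ ω₁ * (ω₁ - y) / x := div_nonneg (by nlinarith) hx0.le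
      have k6 : (0:ℝ) < (ω₁ / x) * ω₁ := mul_pos (div_pos hω₁ hx0) hω₁
      exact ⟨⟨by linarith, k6.le, by linarith, by linarith, by linarith⟩, k6⟩
    · rintro ⟨⟨h1, h2, h3, h4, h5⟩, h6⟩
      simp only [Set.mem_setOf_eq] at h1 h2 h3 h4 h5 h6 ⊢
      have ha : a ≠ 0 := ne_of_gt h6
      have hw : ω₁ ≠ 0 := ne_of_gt hω₁
      refine ⟨(ω₁ * ω₁ / a, ω₁ * (a + b - ω₁) / a), ⟨?_, ?_, ?_⟩, ?_⟩
      · rw [le_div_iff₀ h6]; nlinarith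
      · exact div_nonneg (by nlinarith) h6.le
      · rw [div_le_iff₀ h6]; nlinarith
      · have hx0 : ω₁ * ω₁ / a ≠ 0 := by positivity
        simp only [Prod.mk.injEq]
        constructor
        · field_simp
        · field_simp; ring
  · -- momentum conservation
    rintro p ⟨hp1, -, -⟩
    have hx : p.1 ≠ 0 := by nlinarith
    field_simp
    ring
end

section
/- Let α ∈ ℝ and suppose the combined Zakharov factor 1 + (ω₁/ω₂)^{3α+7/2} − (ω₁/ω₃)^{3α+7/2} − (ω₁/ω₄)^{3α+7/2} multiplies the collision integrand on Δ₁. Then for α = −7/6 (exponent 3α+7/2 = 0) and for α = −3/2 (exponent 3α+7/2 = −1, using ω₁+ω₂ = ω₃+ω₄), the product of this factor with (ω₁^{-α} + ω₂^{-α} − ω₃^{-α} − ω₄^{-α}) vanishes identically on the constraint set ω₁+ω₂ = ω₃+ω₄, ω_i > 0. -/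
/-- For α = −7/6 (exponent 3α+7/2 = 0) and α = −3/2 (exponent 3α+7/2 = −1), the product of
the combined Zakharov factor with (ω₁^{-α}+ω₂^{-α}−ω₃^{-α}−ω₄^{-α}) vanishes identically on
the constraint set ω₁+ω₂ = ω₃+ω₄, ωᵢ > 0. -/
theorem stmt_5 (α : ℝ) (hα : α = -7/6 ∨ α = -3/2) :
    ∀ ω₁ ω₂ ω₃ ω₄ : ℝ, 0 < ω₁ → 0 < ω₂ → 0 < ω₃ → 0 < ω₄ → ω₁ + ω₂ = ω₃ + ω₄ →
      (1 + (ω₁ / ω₂) ^ (3 * α + 7/2) - (ω₁ / ω₃) ^ (3 * α + 7/2)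
          - (ω₁ / ω₄) ^ (3 * α + 7/2)) *
        (ω₁ ^ (-α) + ω₂ ^ (-α) - ω₃ ^ (-α) - ω₄ ^ (-α)) = 0 := by
  intro ω₁ ω₂ ω₃ ω₄ h1 h2 h3 h4 hsum
  rcases hα with h | h
  · have he : 3 * α + 7/2 = 0 := by rw [h]; ring
    rw [he]
    simp [Real.rpow_zero]
  · have he : 3 * α + 7/2 = -1 := by rw [h]; ring
    rw [he]
    have e2 : (ω₁ / ω₂) ^ (-1 : ℝ) = ω₂ / ω₁ := by
      rw [Real.rpow_neg_one, inv_div]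
    have e3 : (ω₁ / ω₃) ^ (-1 : ℝ) = ω₃ / ω₁ := by
      rw [Real.rpow_neg_one, inv_div]
    have e4 : (ω₁ / ω₄) ^ (-1 : ℝ) = ω₄ / ω₁ := by
      rw [Real.rpow_neg_one, inv_div]
    rw [e2, e3, e4]
    have : 1 + ω₂ / ω₁ - ω₃ / ω₁ - ω₄ / ω₁ = 0 := by
      field_simp
      linarith
    rw [this, zero_mul]
end

section
/- Define the norm ‖f‖_{α,β} = sup_{0<ω<1} ω^α |f(ω)| + sup_{ω>1} ω^β |f(ω)| and let E_{α,β} be the corresponding Banach space. If 0 ≤ α < 1 < β, then the collision operator 𝒞 is a bounded (cubic) map from E_{α,β} to itself, i.e. there exists C with ‖𝒞(f)‖_{α,β} ≤ C ‖f‖_{α,β}³ for all f ∈ E_{α,β}. -/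
set_option maxHeartbeats 1000000

open MeasureTheory Set

/-- The interaction weight W = min(√ω₁,√ω₂,√ω₃,√ω₄)/√ω₁. -/
noncomputable def W (a b c d : ℝ) : ℝ :=
  min (min (Real.sqrt a) (Real.sqrt b)) (min (Real.sqrt c) (Real.sqrt d)) / Real.sqrt a

/-- The integrand of the isotropic 4-wave collision operator. -/
noncomputable def collisionIntegrand (f : ℝ → ℝ) (ω₁ : ℝ) (p : ℝ × ℝ) : ℝ :=
  W ω₁ (p.1 + p.2 - ω₁) p.1 p.2 *
    ((f ω₁ + f (p.1 + p.2 - ω₁)) * f p.1 * f p.2 -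
      (f p.1 + f p.2) * f ω₁ * f (p.1 + p.2 - ω₁))

/-- The integration domain {ω₂, ω₃, ω₄ ≥ 0}. -/
def collisionDomain (ω₁ : ℝ) : Set (ℝ × ℝ) :=
  {p | 0 ≤ p.1 ∧ 0 ≤ p.2 ∧ 0 ≤ p.1 + p.2 - ω₁}

/-- The isotropic 4-wave collision operator. -/
noncomputable def collisionOp (f : ℝ → ℝ) (ω₁ : ℝ) : ℝ :=
  ∫ p in collisionDomain ω₁, collisionIntegrand f ω₁ p

namespace Stmt7Aux

/-- The weight function of the space E_{α,β}. -/
noncomputable def w (α β t : ℝ) : ℝ := min (|t| ^ (-α)) (|t| ^ (-β))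

lemma w_nonneg (α β t : ℝ) : 0 ≤ w α β t :=
  le_min (Real.rpow_nonneg (abs_nonneg t) _) (Real.rpow_nonneg (abs_nonneg t) _)

lemma w_meas (α β : ℝ) : Measurable (w α β) := by unfold w; fun_prop

lemma w_anti {α β : ℝ} (hα0 : 0 ≤ α) (hβ0 : 0 ≤ β) {s t : ℝ} (hs : 0 < s) (hst : s ≤ t) :
    w α β t ≤ w α β s := by
  have ht : 0 < t := hs.trans_le hst
  unfold w
  rw [abs_of_pos hs, abs_of_pos ht]
  exact min_le_min (Real.rpow_le_rpow_of_nonpos hs hst (neg_nonpos.2 hα0))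
    (Real.rpow_le_rpow_of_nonpos hs hst (neg_nonpos.2 hβ0))

lemma w_le_low {α β : ℝ} {t : ℝ} (ht : 0 < t) : w α β t ≤ t ^ (-α) := by
  unfold w; rw [abs_of_pos ht]; exact min_le_left _ _

lemma w_le_high {α β : ℝ} {t : ℝ} (ht : 0 < t) : w α β t ≤ t ^ (-β) := by
  unfold w; rw [abs_of_pos ht]; exact min_le_right _ _

lemma abs_le_w {α β : ℝ} (hα : α < 1) (hβ : 1 < β) {f : ℝ → ℝ} {M : ℝ}
    (h1 : ∀ ω ∈ Ioo (0:ℝ) 1, ω ^ α * |f ω| ≤ M)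
    (h2 : ∀ ω ∈ Ioi (1:ℝ), ω ^ β * |f ω| ≤ M)
    {t : ℝ} (ht0 : 0 < t) (ht1 : t ≠ 1) : |f t| ≤ M * w α β t := by
  rcases lt_or_gt_of_ne ht1 with h | h
  · have hw : w α β t = t ^ (-α) := by
      unfold w; rw [abs_of_pos ht0]
      exact min_eq_left (Real.rpow_le_rpow_of_exponent_ge ht0 h.le (by linarith))
    have hb := h1 t ⟨ht0, h⟩
    have hpos : (0:ℝ) < t ^ α := Real.rpow_pos_of_pos ht0 α
    rw [hw, Real.rpow_neg ht0.le, ← div_eq_mul_inv, le_div_iff₀ hpos]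
    nlinarith [hb]
  · have hw : w α β t = t ^ (-β) := by
      unfold w; rw [abs_of_pos ht0]
      exact min_eq_right (Real.rpow_le_rpow_of_exponent_le h.le (by linarith))
    have hb := h2 t h
    have hpos : (0:ℝ) < t ^ β := Real.rpow_pos_of_pos ht0 β
    rw [hw, Real.rpow_neg ht0.le, ← div_eq_mul_inv, le_div_iff₀ hpos]
    nlinarith [hb]

lemma lint_w_le {α β : ℝ} (hα0 : 0 ≤ α) (hα : α < 1) (hβ : 1 < β) :
    ∫⁻ t in Ici (0:ℝ), ENNReal.ofReal (w α β t) ≤ ENNReal.ofReal (1/(1-α) + 1/(β-1)) := by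
  have h0 : ∫⁻ t in Ici (0:ℝ), ENNReal.ofReal (w α β t)
      = ∫⁻ t in Ioi (0:ℝ), ENNReal.ofReal (w α β t) := by
    exact (setLIntegral_congr (Ioi_ae_eq_Ici (a := (0:ℝ)))).symm
  rw [h0, ← Ioc_union_Ioi_eq_Ioi (zero_le_one (α := ℝ)),
    lintegral_union measurableSet_Ioi (Ioc_disjoint_Ioi le_rfl)]
  have p1 : ∫⁻ t in Ioc (0:ℝ) 1, ENNReal.ofReal (w α β t) ≤ ENNReal.ofReal (1/(1-α)) := by
    have hmono : ∫⁻ t in Ioc (0:ℝ) 1, ENNReal.ofReal (w α β t)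
        ≤ ∫⁻ t in Ioc (0:ℝ) 1, ENNReal.ofReal (t ^ (-α)) := by
      refine setLIntegral_mono (by fun_prop) fun x hx => ?_
      exact ENNReal.ofReal_le_ofReal (w_le_low hx.1)
    refine hmono.trans ?_
    have hint : IntegrableOn (fun t : ℝ => t ^ (-α)) (Ioc 0 1) :=
      (intervalIntegrable_iff_integrableOn_Ioc_of_le zero_le_one).1
        (intervalIntegral.intervalIntegrable_rpow' (by linarith))
    rw [← ofReal_integral_eq_lintegral_ofReal hint
      (((ae_restrict_iff' measurableSet_Ioc).2 (Filter.Eventually.of_forall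
        fun x hx => Real.rpow_nonneg hx.1.le _)))]
    apply ENNReal.ofReal_le_ofReal
    rw [← intervalIntegral.integral_of_le zero_le_one, integral_rpow (Or.inl (by linarith))]
    rw [Real.one_rpow, Real.zero_rpow (by intro h; linarith [h] : -α + 1 ≠ 0)]
    rw [show (1 - 0)/(-α+1) = 1/(1-α) by ring]
  have p2 : ∫⁻ t in Ioi (1:ℝ), ENNReal.ofReal (w α β t) ≤ ENNReal.ofReal (1/(β-1)) := by
    have hmono : ∫⁻ t in Ioi (1:ℝ), ENNReal.ofReal (w α β t)
        ≤ ∫⁻ t in Ioi (1:ℝ), ENNReal.ofReal (t ^ (-β)) := by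
      refine setLIntegral_mono (by fun_prop) fun x hx => ?_
      exact ENNReal.ofReal_le_ofReal (w_le_high (lt_trans zero_lt_one hx))
    refine hmono.trans ?_
    have hint : IntegrableOn (fun t : ℝ => t ^ (-β)) (Ioi 1) :=
      integrableOn_Ioi_rpow_of_lt (by linarith) zero_lt_one
    rw [← ofReal_integral_eq_lintegral_ofReal hint
      (((ae_restrict_iff' measurableSet_Ioi).2 (Filter.Eventually.of_forall
        fun x hx => Real.rpow_nonneg (le_of_lt (lt_trans zero_lt_one hx)) _)))]
    apply ENNReal.ofReal_le_ofReal
    rw [integral_Ioi_rpow_of_lt (by linarith) zero_lt_one, Real.one_rpow]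
    have hne : β - 1 ≠ 0 := by linarith
    rw [show -1/(-β+1) = 1/(β-1) by rw [div_eq_div_iff (by linarith) (by linarith)]; ring]
  calc _ ≤ ENNReal.ofReal (1/(1-α)) + ENNReal.ofReal (1/(β-1)) := add_le_add p1 p2
    _ = ENNReal.ofReal (1/(1-α) + 1/(β-1)) := by
        rw [ENNReal.ofReal_add (one_div_nonneg.2 (by linarith)) (one_div_nonneg.2 (by linarith))]


open scoped ENNReal



lemma null_line (c : ℝ) : (volume : Measure (ℝ × ℝ)) {p : ℝ × ℝ | p.1 + p.2 = c} = 0 := by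
  have hms : MeasurableSet {p : ℝ × ℝ | p.1 + p.2 = c} :=
    measurableSet_eq_fun (by fun_prop) measurable_const
  rw [show (volume : Measure (ℝ × ℝ)) = (volume : Measure ℝ).prod volume from rfl,
    Measure.prod_apply hms]
  have h : ∀ x : ℝ, (volume : Measure ℝ) {y : ℝ | x + y = c} = 0 := by
    intro x
    have hset : {y : ℝ | x + y = c} = {c - x} := by
      ext y; simp only [mem_setOf_eq, mem_singleton_iff]
      constructor <;> intro h <;> linarith
    rw [hset, measure_singleton]
  simp only [show ∀ x : ℝ, Prod.mk x ⁻¹' {p : ℝ × ℝ | p.1 + p.2 = c} = {y : ℝ | x + y = c}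
    from fun x => rfl, h, lintegral_zero]

lemma null_vert (c : ℝ) : (volume : Measure (ℝ × ℝ)) {p : ℝ × ℝ | p.1 = c} = 0 := by
  have : {p : ℝ × ℝ | p.1 = c} = ({c} : Set ℝ) ×ˢ (univ : Set ℝ) := by
    ext p; exact ⟨fun h => ⟨h, trivial⟩, fun h => h.1⟩
  rw [this, show (volume : Measure (ℝ × ℝ)) = (volume : Measure ℝ).prod volume from rfl,
    Measure.prod_prod, measure_singleton, zero_mul]

lemma null_hor (c : ℝ) : (volume : Measure (ℝ × ℝ)) {p : ℝ × ℝ | p.2 = c} = 0 := by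
  have : {p : ℝ × ℝ | p.2 = c} = (univ : Set ℝ) ×ˢ ({c} : Set ℝ) := by
    ext p; exact ⟨fun h => ⟨trivial, h⟩, fun h => h.2⟩
  rw [this, show (volume : Measure (ℝ × ℝ)) = (volume : Measure ℝ).prod volume from rfl,
    Measure.prod_prod, measure_singleton, mul_zero]

lemma mul3_le {a b c a' b' c' : ℝ} (ha : a ≤ a') (hb : b ≤ b') (hc : c ≤ c')
    (hb0 : 0 ≤ b) (hc0 : 0 ≤ c) (ha'0 : 0 ≤ a') (hb'0 : 0 ≤ b') : a * b * c ≤ a' * b' * c' :=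
  mul_le_mul (mul_le_mul ha hb hb0 ha'0) hc hc0 (mul_nonneg ha'0 hb'0)

lemma key {α β : ℝ} (hα0 : 0 ≤ α) (hα : α < 1) (hβ : 1 < β) {f : ℝ → ℝ} {M : ℝ}
    (hf : Measurable f) (hM : 0 ≤ M)
    (h1 : ∀ ω ∈ Ioo (0:ℝ) 1, ω ^ α * |f ω| ≤ M)
    (h2 : ∀ ω ∈ Ioi (1:ℝ), ω ^ β * |f ω| ≤ M)
    {a : ℝ} (ha : 0 < a) (ha1 : a ≠ 1) :
    |collisionOp f a| ≤ M ^ 3 * (1/(1-α) + 1/(β-1))^2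
      * (3 * w α β a + 2 * w α β (a/2)) := by
  set I : ℝ := 1/(1-α) + 1/(β-1) with hIdef
  have hI0 : 0 ≤ I := by
    have : (0:ℝ) ≤ 1/(1-α) := one_div_nonneg.2 (by linarith)
    have : (0:ℝ) ≤ 1/(β-1) := one_div_nonneg.2 (by linarith)
    unfold I; linarith
  set D := collisionDomain a with hDdef
  have hD : MeasurableSet D := by
    have : D = {p : ℝ × ℝ | 0 ≤ p.1} ∩ ({p : ℝ × ℝ | 0 ≤ p.2} ∩ {p : ℝ × ℝ | 0 ≤ p.1 + p.2 - a}) := by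
      ext p; simp [hDdef, collisionDomain, and_assoc]
    rw [this]
    exact (measurableSet_le measurable_const measurable_fst).inter
      ((measurableSet_le measurable_const measurable_snd).inter
        (measurableSet_le measurable_const (by fun_prop)))
  -- step 1 : reduce to a lintegral
  have step1 : |collisionOp f a| ≤ (∫⁻ p in D, ENNReal.ofReal |collisionIntegrand f a p|).toReal := by
    have h := norm_integral_le_lintegral_norm (μ := volume.restrict D) (collisionIntegrand f a)
    simpa [collisionOp, hDdef, Real.norm_eq_abs] using h
  -- the basic weight functions in ℝ≥0∞
  set u : ℝ → ℝ≥0∞ := fun t => ENNReal.ofReal (w α β t) with hudef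
  have hu : Measurable u := ENNReal.measurable_ofReal.comp (w_meas α β)
  set H : ℝ → ℝ≥0∞ := (Ici (0:ℝ)).indicator u with hHdef
  have hH : Measurable H := hu.indicator measurableSet_Ici
  have hL : ∫⁻ t, H t ≤ ENNReal.ofReal I := by
    rw [hHdef, lintegral_indicator measurableSet_Ici]
    exact lint_w_le hα0 hα hβ
  -- the three basic double-integral estimates
  have i34 : ∫⁻ p in D, u p.1 * u p.2 ≤ ENNReal.ofReal I * ENNReal.ofReal I := by
    have hsub : D ⊆ (Ici (0:ℝ)) ×ˢ (Ici (0:ℝ)) := fun p hp => ⟨hp.1, hp.2.1⟩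
    refine (lintegral_mono_set hsub).trans ?_
    have hrw : (volume : Measure (ℝ × ℝ)).restrict ((Ici (0:ℝ)) ×ˢ (Ici (0:ℝ)))
        = ((volume : Measure ℝ).restrict (Ici 0)).prod ((volume : Measure ℝ).restrict (Ici 0)) := by
      rw [Measure.prod_restrict]; rfl
    rw [hrw, lintegral_prod_mul hu.aemeasurable hu.aemeasurable]
    have := lint_w_le (α := α) (β := β) hα0 hα hβ
    exact mul_le_mul' this this
  have i23 : ∫⁻ p in D, u (p.1 + p.2 - a) * u p.1 ≤ ENNReal.ofReal I * ENNReal.ofReal I := by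
    have hle : ∀ p : ℝ × ℝ, D.indicator (fun p : ℝ × ℝ => u (p.1 + p.2 - a) * u p.1) p
        ≤ H p.1 * H (p.1 + p.2 - a) := by
      intro p
      by_cases hp : p ∈ D
      · rw [indicator_of_mem hp]
        rw [hHdef, indicator_of_mem (show p.1 ∈ Ici (0:ℝ) from hp.1),
          indicator_of_mem (show p.1 + p.2 - a ∈ Ici (0:ℝ) from hp.2.2), mul_comm]
      · rw [indicator_of_notMem hp]; exact zero_le
    calc ∫⁻ p in D, u (p.1 + p.2 - a) * u p.1
        = ∫⁻ p, D.indicator (fun p : ℝ × ℝ => u (p.1 + p.2 - a) * u p.1) p :=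
          (lintegral_indicator hD _).symm
      _ ≤ ∫⁻ p : ℝ × ℝ, H p.1 * H (p.1 + p.2 - a) := lintegral_mono hle
      _ = ∫⁻ x : ℝ, ∫⁻ y : ℝ, H x * H (x + y - a) := by
          rw [show (volume : Measure (ℝ × ℝ)) = (volume : Measure ℝ).prod volume from rfl]
          exact lintegral_prod _ (by fun_prop)
      _ = ∫⁻ x : ℝ, H x * ∫⁻ y : ℝ, H y := by
          refine lintegral_congr fun x => ?_
          rw [lintegral_const_mul _ (by fun_prop)]
          congr 1
          calc ∫⁻ y : ℝ, H (x + y - a) = ∫⁻ y : ℝ, H (y + (x - a)) := by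
                refine lintegral_congr fun y => ?_; ring_nf
            _ = ∫⁻ y : ℝ, H y := lintegral_add_right_eq_self H (x - a)
      _ = (∫⁻ x : ℝ, H x) * ∫⁻ y : ℝ, H y := lintegral_mul_const _ hH
      _ ≤ ENNReal.ofReal I * ENNReal.ofReal I := mul_le_mul' hL hL
  have i24 : ∫⁻ p in D, u (p.1 + p.2 - a) * u p.2 ≤ ENNReal.ofReal I * ENNReal.ofReal I := by
    have hle : ∀ p : ℝ × ℝ, D.indicator (fun p : ℝ × ℝ => u (p.1 + p.2 - a) * u p.2) p
        ≤ H p.2 * H (p.1 + p.2 - a) := by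
      intro p
      by_cases hp : p ∈ D
      · rw [indicator_of_mem hp]
        rw [hHdef, indicator_of_mem (show p.2 ∈ Ici (0:ℝ) from hp.2.1),
          indicator_of_mem (show p.1 + p.2 - a ∈ Ici (0:ℝ) from hp.2.2), mul_comm]
      · rw [indicator_of_notMem hp]; exact zero_le
    calc ∫⁻ p in D, u (p.1 + p.2 - a) * u p.2
        = ∫⁻ p, D.indicator (fun p : ℝ × ℝ => u (p.1 + p.2 - a) * u p.2) p :=
          (lintegral_indicator hD _).symm
      _ ≤ ∫⁻ p : ℝ × ℝ, H p.2 * H (p.1 + p.2 - a) := lintegral_mono hle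
      _ = ∫⁻ y : ℝ, ∫⁻ x : ℝ, H y * H (x + y - a) := by
          rw [show (volume : Measure (ℝ × ℝ)) = (volume : Measure ℝ).prod volume from rfl]
          exact lintegral_prod_symm _ (by fun_prop)
      _ = ∫⁻ y : ℝ, H y * ∫⁻ x : ℝ, H x := by
          refine lintegral_congr fun y => ?_
          rw [lintegral_const_mul _ (by fun_prop)]
          congr 1
          calc ∫⁻ x : ℝ, H (x + y - a) = ∫⁻ x : ℝ, H (x + (y - a)) := by
                refine lintegral_congr fun x => ?_; ring_nf
            _ = ∫⁻ x : ℝ, H x := lintegral_add_right_eq_self H (y - a)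
      _ = (∫⁻ y : ℝ, H y) * ∫⁻ x : ℝ, H x := lintegral_mul_const _ hH
      _ ≤ ENNReal.ofReal I * ENNReal.ofReal I := mul_le_mul' hL hL
  -- the null set where the pointwise bound may fail
  set N : Set (ℝ × ℝ) := ({p : ℝ × ℝ | p.1 = 0} ∪ {p : ℝ × ℝ | p.1 = 1}) ∪
    (({p : ℝ × ℝ | p.2 = 0} ∪ {p : ℝ × ℝ | p.2 = 1}) ∪
     ({p : ℝ × ℝ | p.1 + p.2 = a} ∪ {p : ℝ × ℝ | p.1 + p.2 = a + 1})) with hNdef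
  have hN : (volume : Measure (ℝ × ℝ)) N = 0 := by
    rw [hNdef]
    refine measure_union_null (measure_union_null (null_vert 0) (null_vert 1))
      (measure_union_null (measure_union_null (null_hor 0) (null_hor 1))
        (measure_union_null (null_line a) (null_line (a+1))))
  set A : ℝ := M ^ 3 * w α β a with hAdef
  set B : ℝ := M ^ 3 * w α β (a/2) with hBdef
  have hA0 : 0 ≤ A := mul_nonneg (pow_nonneg hM 3) (w_nonneg α β a)
  have hB0 : 0 ≤ B := mul_nonneg (pow_nonneg hM 3) (w_nonneg α β (a/2))
  -- the pointwise a.e. bound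
  have hae : ∀ᵐ p ∂(volume.restrict D), ENNReal.ofReal |collisionIntegrand f a p| ≤
      ENNReal.ofReal A * (u p.1 * u p.2)
      + (ENNReal.ofReal A + ENNReal.ofReal B) * (u (p.1 + p.2 - a) * u p.1)
      + (ENNReal.ofReal A + ENNReal.ofReal B) * (u (p.1 + p.2 - a) * u p.2) := by
    have hNae : ∀ᵐ p ∂(volume.restrict D), p ∉ N :=
      ae_restrict_of_ae ((measure_eq_zero_iff_ae_notMem).1 hN)
    have hDae : ∀ᵐ p ∂(volume.restrict D), p ∈ D := ae_restrict_mem hD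
    filter_upwards [hNae, hDae] with p hpN hpD
    obtain ⟨hd3, hd4, hd2⟩ := hpD
    rw [hNdef] at hpN
    simp only [mem_union, mem_setOf_eq, not_or] at hpN
    obtain ⟨⟨n30, n31⟩, ⟨n40, n41⟩, ⟨n20, n21⟩⟩ := hpN
    have h30 : 0 < p.1 := lt_of_le_of_ne hd3 (Ne.symm n30)
    have h40 : 0 < p.2 := lt_of_le_of_ne hd4 (Ne.symm n40)
    have h20 : 0 < p.1 + p.2 - a := by
      rcases lt_or_eq_of_le hd2 with h | h
      · exact h
      · exact absurd (by linarith : p.1 + p.2 = a) n20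
    have h21 : p.1 + p.2 - a ≠ 1 := fun h => n21 (by linarith)
    -- bounds on |f|
    have ba : |f a| ≤ M * w α β a := abs_le_w hα hβ h1 h2 ha ha1
    have b3 : |f p.1| ≤ M * w α β p.1 := abs_le_w hα hβ h1 h2 h30 n31
    have b4 : |f p.2| ≤ M * w α β p.2 := abs_le_w hα hβ h1 h2 h40 n41
    have b2 : |f (p.1 + p.2 - a)| ≤ M * w α β (p.1 + p.2 - a) := abs_le_w hα hβ h1 h2 h20 h21
    set w2 : ℝ := w α β (p.1 + p.2 - a)
    set w3 : ℝ := w α β p.1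
    set w4 : ℝ := w α β p.2
    have hw2 : 0 ≤ w2 := w_nonneg α β _
    have hw3 : 0 ≤ w3 := w_nonneg α β _
    have hw4 : 0 ≤ w4 := w_nonneg α β _
    have hwa : 0 ≤ w α β a := w_nonneg α β a
    have hwa2 : 0 ≤ w α β (a/2) := w_nonneg α β (a/2)
    -- the real-valued pointwise estimate
    have hreal : |collisionIntegrand f a p| ≤
        A * (w3 * w4) + (A + B) * (w2 * w3) + (A + B) * (w2 * w4) := by
      have hW0 : 0 ≤ W a (p.1 + p.2 - a) p.1 p.2 := by
        unfold W
        exact div_nonneg (le_min (le_min (Real.sqrt_nonneg _) (Real.sqrt_nonneg _))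
          (le_min (Real.sqrt_nonneg _) (Real.sqrt_nonneg _))) (Real.sqrt_nonneg _)
      have hW1 : W a (p.1 + p.2 - a) p.1 p.2 ≤ 1 := by
        unfold W
        rw [div_le_one (Real.sqrt_pos.2 ha)]
        exact (min_le_left _ _).trans (min_le_left _ _)
      have hkey : w2 * (w3 * w4) ≤ w α β (a/2) * (w2 * w3) + w α β (a/2) * (w2 * w4) := by
        rcases le_total p.1 p.2 with hc | hc
        · have h4half : a/2 ≤ p.2 := by linarith
          have hle : w4 ≤ w α β (a/2) := w_anti hα0 (by linarith) (by linarith) h4half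
          calc w2 * (w3 * w4) ≤ w2 * (w3 * w α β (a/2)) := by
                apply mul_le_mul_of_nonneg_left (mul_le_mul_of_nonneg_left hle hw3) hw2
            _ = w α β (a/2) * (w2 * w3) := by ring
            _ ≤ _ := le_add_of_nonneg_right (by
                exact mul_nonneg hwa2 (mul_nonneg hw2 hw4))
        · have h3half : a/2 ≤ p.1 := by linarith
          have hle : w3 ≤ w α β (a/2) := w_anti hα0 (by linarith) (by linarith) h3half
          calc w2 * (w3 * w4) ≤ w2 * (w α β (a/2) * w4) := by
                apply mul_le_mul_of_nonneg_left (mul_le_mul_of_nonneg_right hle hw4) hw2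
            _ = w α β (a/2) * (w2 * w4) := by ring
            _ ≤ _ := le_add_of_nonneg_left (by
                exact mul_nonneg hwa2 (mul_nonneg hw2 hw3))
      calc |collisionIntegrand f a p|
          = W a (p.1 + p.2 - a) p.1 p.2 *
            |(f a + f (p.1 + p.2 - a)) * f p.1 * f p.2
              - (f p.1 + f p.2) * f a * f (p.1 + p.2 - a)| := by
            rw [collisionIntegrand, abs_mul, abs_of_nonneg hW0]
        _ ≤ 1 * |(f a + f (p.1 + p.2 - a)) * f p.1 * f p.2
              - (f p.1 + f p.2) * f a * f (p.1 + p.2 - a)| :=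
            mul_le_mul_of_nonneg_right hW1 (abs_nonneg _)
        _ = |(f a + f (p.1 + p.2 - a)) * f p.1 * f p.2
              - (f p.1 + f p.2) * f a * f (p.1 + p.2 - a)| := one_mul _
        _ ≤ |(f a + f (p.1 + p.2 - a)) * f p.1 * f p.2|
              + |(f p.1 + f p.2) * f a * f (p.1 + p.2 - a)| := abs_sub _ _
        _ ≤ (|f a| + |f (p.1 + p.2 - a)|) * |f p.1| * |f p.2|
              + (|f p.1| + |f p.2|) * |f a| * |f (p.1 + p.2 - a)| := by
            rw [abs_mul, abs_mul, abs_mul, abs_mul]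
            exact add_le_add
              (mul3_le (abs_add_le _ _) le_rfl le_rfl (abs_nonneg _) (abs_nonneg _)
                (add_nonneg (abs_nonneg _) (abs_nonneg _)) (abs_nonneg _))
              (mul3_le (abs_add_le _ _) le_rfl le_rfl (abs_nonneg _) (abs_nonneg _)
                (add_nonneg (abs_nonneg _) (abs_nonneg _)) (abs_nonneg _))
        _ ≤ (M * w α β a + M * w2) * (M * w3) * (M * w4)
              + (M * w3 + M * w4) * (M * w α β a) * (M * w2) := by
            exact add_le_add
              (mul3_le (add_le_add ba b2) b3 b4 (abs_nonneg _) (abs_nonneg _)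
                (add_nonneg (mul_nonneg hM hwa) (mul_nonneg hM hw2))
                (mul_nonneg hM hw3))
              (mul3_le (add_le_add b3 b4) ba b2 (abs_nonneg _) (abs_nonneg _)
                (add_nonneg (mul_nonneg hM hw3) (mul_nonneg hM hw4))
                (mul_nonneg hM hwa))
        _ = A * (w3 * w4) + A * (w2 * w3) + A * (w2 * w4) + M ^ 3 * (w2 * (w3 * w4)) := by
            rw [hAdef]; ring
        _ ≤ A * (w3 * w4) + A * (w2 * w3) + A * (w2 * w4)
              + M ^ 3 * (w α β (a/2) * (w2 * w3) + w α β (a/2) * (w2 * w4)) := by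
            exact add_le_add_right (mul_le_mul_of_nonneg_left hkey (pow_nonneg hM 3)) _
        _ = A * (w3 * w4) + (A + B) * (w2 * w3) + (A + B) * (w2 * w4) := by
            rw [hBdef]; ring
    calc ENNReal.ofReal |collisionIntegrand f a p|
        ≤ ENNReal.ofReal (A * (w3 * w4) + (A + B) * (w2 * w3) + (A + B) * (w2 * w4)) :=
          ENNReal.ofReal_le_ofReal hreal
      _ = ENNReal.ofReal A * (u p.1 * u p.2)
          + (ENNReal.ofReal A + ENNReal.ofReal B) * (u (p.1 + p.2 - a) * u p.1)
          + (ENNReal.ofReal A + ENNReal.ofReal B) * (u (p.1 + p.2 - a) * u p.2) := by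
          have hAB0 : 0 ≤ A + B := add_nonneg hA0 hB0
          rw [ENNReal.ofReal_add (add_nonneg (mul_nonneg hA0 (mul_nonneg hw3 hw4))
              (mul_nonneg hAB0 (mul_nonneg hw2 hw3))) (mul_nonneg hAB0 (mul_nonneg hw2 hw4)),
            ENNReal.ofReal_add (mul_nonneg hA0 (mul_nonneg hw3 hw4))
              (mul_nonneg hAB0 (mul_nonneg hw2 hw3)),
            ENNReal.ofReal_mul hA0, ENNReal.ofReal_mul hAB0, ENNReal.ofReal_mul hAB0,
            ENNReal.ofReal_mul hw3, ENNReal.ofReal_mul hw2, ENNReal.ofReal_mul hw2,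
            ENNReal.ofReal_add hA0 hB0]
  -- combine everything
  have big : ∫⁻ p in D, ENNReal.ofReal |collisionIntegrand f a p|
      ≤ ENNReal.ofReal (M ^ 3 * I ^ 2 * (3 * w α β a + 2 * w α β (a/2))) := by
    refine (lintegral_mono_ae hae).trans ?_
    have hm34 : Measurable fun p : ℝ × ℝ => u p.1 * u p.2 := by fun_prop
    have hm23 : Measurable fun p : ℝ × ℝ => u (p.1 + p.2 - a) * u p.1 := by fun_prop
    have hm24 : Measurable fun p : ℝ × ℝ => u (p.1 + p.2 - a) * u p.2 := by fun_prop
    rw [lintegral_add_left (by fun_prop), lintegral_add_left (by fun_prop),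
      lintegral_const_mul _ hm34, lintegral_const_mul _ hm23, lintegral_const_mul _ hm24]
    calc ENNReal.ofReal A * (∫⁻ p in D, u p.1 * u p.2)
          + (ENNReal.ofReal A + ENNReal.ofReal B) * (∫⁻ p in D, u (p.1 + p.2 - a) * u p.1)
          + (ENNReal.ofReal A + ENNReal.ofReal B) * (∫⁻ p in D, u (p.1 + p.2 - a) * u p.2)
        ≤ ENNReal.ofReal A * (ENNReal.ofReal I * ENNReal.ofReal I)
          + (ENNReal.ofReal A + ENNReal.ofReal B) * (ENNReal.ofReal I * ENNReal.ofReal I)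
          + (ENNReal.ofReal A + ENNReal.ofReal B) * (ENNReal.ofReal I * ENNReal.ofReal I) := by
          gcongr
      _ = ENNReal.ofReal (3 * A + 2 * B) * ENNReal.ofReal (I * I) := by
          have h3A : (0:ℝ) ≤ 3 * A := by linarith
          have h2B : (0:ℝ) ≤ 2 * B := by linarith
          rw [ENNReal.ofReal_add h3A h2B, ENNReal.ofReal_mul (by norm_num : (0:ℝ) ≤ 3),
            ENNReal.ofReal_mul (by norm_num : (0:ℝ) ≤ 2), ENNReal.ofReal_mul hI0,
            show (ENNReal.ofReal (3:ℝ) : ℝ≥0∞) = 3 by norm_num,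
            show (ENNReal.ofReal (2:ℝ) : ℝ≥0∞) = 2 by norm_num]
          ring
      _ = ENNReal.ofReal (M ^ 3 * I ^ 2 * (3 * w α β a + 2 * w α β (a/2))) := by
          rw [← ENNReal.ofReal_mul (by positivity)]
          congr 1
          rw [hAdef, hBdef]; ring
  have hRHS0 : 0 ≤ M ^ 3 * I ^ 2 * (3 * w α β a + 2 * w α β (a/2)) := by
    have := w_nonneg α β a
    have := w_nonneg α β (a/2)
    positivity
  exact step1.trans (ENNReal.toReal_le_of_le_ofReal hRHS0 big)

end Stmt7Aux

open Stmt7Aux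

/-- For 0 ≤ α < 1 < β, the collision operator is a bounded cubic map from E_{α,β} to
itself: if ω^α|f| ≤ M on (0,1) and ω^β|f| ≤ M on (1,∞), then the same weighted bounds
hold for 𝒞(f) with constant C·M³. -/
theorem stmt_7 (α β : ℝ) (hα0 : 0 ≤ α) (hα : α < 1) (hβ : 1 < β) :
    ∃ C > (0:ℝ), ∀ (f : ℝ → ℝ) (M : ℝ), Measurable f → 0 ≤ M →
      (∀ ω ∈ Ioo (0:ℝ) 1, ω ^ α * |f ω| ≤ M) →
      (∀ ω ∈ Ioi (1:ℝ), ω ^ β * |f ω| ≤ M) →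
      (∀ ω ∈ Ioo (0:ℝ) 1, ω ^ α * |collisionOp f ω| ≤ C * M ^ 3) ∧
      (∀ ω ∈ Ioi (1:ℝ), ω ^ β * |collisionOp f ω| ≤ C * M ^ 3) := by
  have h1α : (0:ℝ) < 1 - α := by linarith
  have hβ1 : (0:ℝ) < β - 1 := by linarith
  set I : ℝ := 1/(1-α) + 1/(β-1) with hIdef
  have hI0 : 0 ≤ I := by
    have h1 : (0:ℝ) ≤ 1/(1-α) := one_div_nonneg.2 h1α.le
    have h2 : (0:ℝ) ≤ 1/(β-1) := one_div_nonneg.2 hβ1.le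
    rw [hIdef]; linarith
  have h2α : (0:ℝ) ≤ (2:ℝ) ^ α := (Real.rpow_pos_of_pos two_pos α).le
  have h2β : (0:ℝ) ≤ (2:ℝ) ^ β := (Real.rpow_pos_of_pos two_pos β).le
  refine ⟨I^2 * (3 + 2 * (2:ℝ) ^ α + 2 * (2:ℝ) ^ β) + 1, by positivity, ?_⟩
  intro f M hf hM h1 h2
  constructor
  · intro ω hω
    have hk := key hα0 hα hβ hf hM h1 h2 hω.1 (ne_of_lt hω.2)
    rw [← hIdef] at hk
    have hpow : (0:ℝ) < ω ^ α := Real.rpow_pos_of_pos hω.1 α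
    have hb1 : ω ^ α * w α β ω ≤ 1 := by
      calc ω ^ α * w α β ω ≤ ω ^ α * ω ^ (-α) :=
            mul_le_mul_of_nonneg_left (w_le_low hω.1) hpow.le
        _ = 1 := by rw [← Real.rpow_add hω.1]; norm_num
    have hb2 : ω ^ α * w α β (ω/2) ≤ (2:ℝ) ^ α := by
      have hhalf : (ω/2 : ℝ) ^ (-α) = ω ^ (-α) * (2:ℝ) ^ α := by
        rw [Real.div_rpow hω.1.le (by norm_num : (0:ℝ) ≤ 2),
          Real.rpow_neg (by norm_num : (0:ℝ) ≤ 2) α]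
        rw [div_eq_mul_inv, inv_inv]
      calc ω ^ α * w α β (ω/2) ≤ ω ^ α * ((ω/2) ^ (-α)) :=
            mul_le_mul_of_nonneg_left (w_le_low (half_pos hω.1)) hpow.le
        _ = (ω ^ α * ω ^ (-α)) * (2:ℝ) ^ α := by rw [hhalf]; ring
        _ = (2:ℝ) ^ α := by rw [← Real.rpow_add hω.1]; norm_num
    calc ω ^ α * |collisionOp f ω|
        ≤ ω ^ α * (M ^ 3 * I ^ 2 * (3 * w α β ω + 2 * w α β (ω/2))) :=
          mul_le_mul_of_nonneg_left hk hpow.le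
      _ = M ^ 3 * I ^ 2 * (3 * (ω ^ α * w α β ω) + 2 * (ω ^ α * w α β (ω/2))) := by ring
      _ ≤ M ^ 3 * I ^ 2 * (3 * 1 + 2 * (2:ℝ) ^ α) := by
          have hM3 : (0:ℝ) ≤ M ^ 3 := pow_nonneg hM 3
          have hI2 : (0:ℝ) ≤ I ^ 2 := sq_nonneg I
          have hlin : 3 * (ω ^ α * w α β ω) + 2 * (ω ^ α * w α β (ω/2))
              ≤ 3 * 1 + 2 * (2:ℝ) ^ α := by linarith
          exact mul_le_mul_of_nonneg_left hlin (mul_nonneg hM3 hI2)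
      _ ≤ (I^2 * (3 + 2 * (2:ℝ) ^ α + 2 * (2:ℝ) ^ β) + 1) * M ^ 3 := by
          nlinarith [mul_nonneg (pow_nonneg hM 3) (mul_nonneg (sq_nonneg I) h2β),
            pow_nonneg hM 3]
  · intro ω hω
    have hω0 : (0:ℝ) < ω := lt_trans zero_lt_one hω
    have hk := key hα0 hα hβ hf hM h1 h2 hω0 (ne_of_gt hω)
    rw [← hIdef] at hk
    have hpow : (0:ℝ) < ω ^ β := Real.rpow_pos_of_pos hω0 β
    have hb1 : ω ^ β * w α β ω ≤ 1 := by
      calc ω ^ β * w α β ω ≤ ω ^ β * ω ^ (-β) :=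
            mul_le_mul_of_nonneg_left (w_le_high hω0) hpow.le
        _ = 1 := by rw [← Real.rpow_add hω0]; norm_num
    have hb2 : ω ^ β * w α β (ω/2) ≤ (2:ℝ) ^ β := by
      have hhalf : (ω/2 : ℝ) ^ (-β) = ω ^ (-β) * (2:ℝ) ^ β := by
        rw [Real.div_rpow hω0.le (by norm_num : (0:ℝ) ≤ 2),
          Real.rpow_neg (by norm_num : (0:ℝ) ≤ 2) β]
        rw [div_eq_mul_inv, inv_inv]
      calc ω ^ β * w α β (ω/2) ≤ ω ^ β * ((ω/2) ^ (-β)) :=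
            mul_le_mul_of_nonneg_left (w_le_high (half_pos hω0)) hpow.le
        _ = (ω ^ β * ω ^ (-β)) * (2:ℝ) ^ β := by rw [hhalf]; ring
        _ = (2:ℝ) ^ β := by rw [← Real.rpow_add hω0]; norm_num
    calc ω ^ β * |collisionOp f ω|
        ≤ ω ^ β * (M ^ 3 * I ^ 2 * (3 * w α β ω + 2 * w α β (ω/2))) :=
          mul_le_mul_of_nonneg_left hk hpow.le
      _ = M ^ 3 * I ^ 2 * (3 * (ω ^ β * w α β ω) + 2 * (ω ^ β * w α β (ω/2))) := by ring
      _ ≤ M ^ 3 * I ^ 2 * (3 * 1 + 2 * (2:ℝ) ^ β) := by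
          have hM3 : (0:ℝ) ≤ M ^ 3 := pow_nonneg hM 3
          have hI2 : (0:ℝ) ≤ I ^ 2 := sq_nonneg I
          have hlin : 3 * (ω ^ β * w α β ω) + 2 * (ω ^ β * w α β (ω/2))
              ≤ 3 * 1 + 2 * (2:ℝ) ^ β := by linarith
          exact mul_le_mul_of_nonneg_left hlin (mul_nonneg hM3 hI2)
      _ ≤ (I^2 * (3 + 2 * (2:ℝ) ^ α + 2 * (2:ℝ) ^ β) + 1) * M ^ 3 := by
          nlinarith [mul_nonneg (pow_nonneg hM 3) (mul_nonneg (sq_nonneg I) h2α),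
            pow_nonneg hM 3]
end

section
/- Let ρ(ω) = ω^{-α} 1_{ω<1} + ω^{-β} 1_{ω>1} with 0 ≤ α < 5/4 and β > 1. Then the flux integral J₃(ρ)(1) = ∫_{ω₁>0, ω₂>1, 0<ω₃<1, ω₁+ω₂=ω₃+ω₄} √ω₁ · W · ρ(ω₁)ρ(ω₂)ρ(ω₃) dω₁ dω₂ dω₃ is finite, where W = min(√ω₁,√ω₂,√ω₃,√ω₄)/√ω₁ and ω₄ = ω₁+ω₂−ω₃. -/
open MeasureTheory Set

lemma rho_meas (α β : ℝ) : Measurable (fun x : ℝ => if x < 1 then x ^ (-α) else x ^ (-β)) := by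
  apply Measurable.ite (measurableSet_lt measurable_id measurable_const) <;> fun_prop

lemma rho_nonneg (α β : ℝ) (x : ℝ) (hx : 0 ≤ x) :
    0 ≤ (if x < 1 then x ^ (-α) else x ^ (-β)) := by
  split <;> exact Real.rpow_nonneg hx _

set_option maxHeartbeats 1000000 in

/-- Locality of the flux integral J₃(ρ)(1) for the weight
ρ(ω) = ω^{-α}1_{ω<1} + ω^{-β}1_{ω>1} with 0 ≤ α < 5/4, β > 1; here q = (ω₁,ω₂,ω₃)
and ω₄ = ω₁+ω₂−ω₃. -/
theorem stmt_9 (α β : ℝ) (hα0 : 0 ≤ α) (hα : α < 5/4) (hβ : 1 < β) :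
    IntegrableOn
      (fun q : ℝ × ℝ × ℝ =>
        Real.sqrt q.1 * W q.1 q.2.1 q.2.2 (q.1 + q.2.1 - q.2.2) *
          (if q.1 < 1 then q.1 ^ (-α) else q.1 ^ (-β)) *
          (if q.2.1 < 1 then q.2.1 ^ (-α) else q.2.1 ^ (-β)) *
          (if q.2.2 < 1 then q.2.2 ^ (-α) else q.2.2 ^ (-β)))
      {q : ℝ × ℝ × ℝ | 0 < q.1 ∧ 1 < q.2.1 ∧ 0 < q.2.2 ∧ q.2.2 < 1} := by
  set ρ : ℝ → ℝ := fun x => if x < 1 then x ^ (-α) else x ^ (-β) with hρ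
  have hS : {q : ℝ × ℝ × ℝ | 0 < q.1 ∧ 1 < q.2.1 ∧ 0 < q.2.2 ∧ q.2.2 < 1}
      = (Ioi (0:ℝ)) ×ˢ ((Ioi (1:ℝ)) ×ˢ (Ioo (0:ℝ) 1)) := by
    ext q
    simp only [mem_setOf_eq, mem_prod, mem_Ioi, mem_Ioo]
  set F : ℝ → ℝ := fun x => min (x ^ (1/4 : ℝ)) 1 * ρ x with hF
  set H : ℝ → ℝ := fun z => z ^ (1/4 : ℝ) * ρ z with hH
  -- integrability of the three one-dimensional factors
  have hFint : IntegrableOn F (Ioi 0) := by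
    have h1 : IntegrableOn F (Ioc 0 1) := by
      have : IntegrableOn (fun x : ℝ => x ^ (1/4 - α)) (Ioc 0 1) := by
        rw [← intervalIntegrable_iff_integrableOn_Ioc_of_le zero_le_one]
        exact intervalIntegral.intervalIntegrable_rpow' (by linarith)
      refine this.congr_fun ?_ measurableSet_Ioc
      intro x hx
      rcases lt_or_eq_of_le hx.2 with h | h
      · simp only [hF, hρ, if_pos h]
        rw [min_eq_left (Real.rpow_le_one (le_of_lt hx.1) (le_of_lt h) (by norm_num)),
          ← Real.rpow_add hx.1]
        ring_nf
      · simp [hF, hρ, h, Real.one_rpow]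
    have h2 : IntegrableOn F (Ioi 1) := by
      have : IntegrableOn (fun x : ℝ => x ^ (-β)) (Ioi 1) :=
        integrableOn_Ioi_rpow_of_lt (by linarith) one_pos
      refine this.congr_fun ?_ measurableSet_Ioi
      intro x hx
      simp only [mem_Ioi] at hx
      simp only [hF, hρ, if_neg (not_lt.2 hx.le)]
      rw [min_eq_right (Real.one_le_rpow hx.le (by norm_num)), one_mul]
    have : Ioi (0:ℝ) = Ioc 0 1 ∪ Ioi 1 := (Ioc_union_Ioi_eq_Ioi zero_le_one).symm
    rw [this]
    exact h1.union h2
  have hGint : IntegrableOn ρ (Ioi 1) := by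
    have : IntegrableOn (fun x : ℝ => x ^ (-β)) (Ioi 1) :=
      integrableOn_Ioi_rpow_of_lt (by linarith) one_pos
    refine this.congr_fun ?_ measurableSet_Ioi
    intro x hx
    simp only [mem_Ioi] at hx
    simp [hρ, not_lt.2 hx.le]
  have hHint : IntegrableOn H (Ioo 0 1) := by
    have : IntegrableOn (fun x : ℝ => x ^ (1/4 - α)) (Ioo 0 1) := by
      have := (intervalIntegrable_iff_integrableOn_Ioc_of_le
        (by norm_num : (0:ℝ) ≤ 1)).1
        (intervalIntegral.intervalIntegrable_rpow' (r := 1/4 - α) (by linarith))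
      exact this.mono_set Ioo_subset_Ioc_self
    refine this.congr_fun ?_ measurableSet_Ioo
    intro x hx
    simp only [hH, hρ, if_pos hx.2]
    rw [← Real.rpow_add hx.1]
    ring_nf
  -- integrability of the dominating product over the box
  have hP : IntegrableOn (fun q : ℝ × ℝ × ℝ => F q.1 * (ρ q.2.1 * H q.2.2))
      ((Ioi (0:ℝ)) ×ˢ ((Ioi (1:ℝ)) ×ˢ (Ioo (0:ℝ) 1))) := by
    have hQ : IntegrableOn (fun p : ℝ × ℝ => ρ p.1 * H p.2)
        ((Ioi (1:ℝ)) ×ˢ (Ioo (0:ℝ) 1)) := by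
      rw [IntegrableOn, Measure.volume_eq_prod, ← Measure.prod_restrict]
      exact hGint.mul_prod hHint
    rw [IntegrableOn, Measure.volume_eq_prod, ← Measure.prod_restrict]
    exact hFint.mul_prod hQ
  rw [hS]
  -- domination
  refine Integrable.mono' hP ?_ ?_
  · apply Measurable.aestronglyMeasurable
    apply Measurable.mul
    apply Measurable.mul
    apply Measurable.mul
    · unfold W
      fun_prop
    · exact (rho_meas α β).comp measurable_fst
    · exact (rho_meas α β).comp (measurable_fst.comp measurable_snd)
    · exact (rho_meas α β).comp (measurable_snd.comp measurable_snd)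
  · rw [MeasureTheory.ae_restrict_iff' (by measurability)]
    refine Filter.Eventually.of_forall ?_
    rintro ⟨a, b, c⟩ ⟨ha, hb, hc⟩
    simp only [mem_Ioi, mem_Ioo] at ha hb hc
    obtain ⟨hc0, hc1⟩ := hc
    set M : ℝ := min (min (Real.sqrt a) (Real.sqrt b)) (min (Real.sqrt c)
      (Real.sqrt (a + b - c)))
    have hsa : (0:ℝ) < Real.sqrt a := Real.sqrt_pos.2 ha
    have hW : Real.sqrt a * W a b c (a + b - c) = M := by
      unfold W
      field_simp
      rfl
    have hM0 : 0 ≤ M := by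
      refine le_min (le_min (Real.sqrt_nonneg _) (Real.sqrt_nonneg _))
        (le_min (Real.sqrt_nonneg _) (Real.sqrt_nonneg _))
    have hMa : M ≤ Real.sqrt a := (min_le_left _ _).trans (min_le_left _ _)
    have hMc : M ≤ Real.sqrt c := (min_le_right _ _).trans (min_le_left _ _)
    -- key pointwise bound:  M ≤ min (a^{1/4}) 1 * c^{1/4}
    have hkey : M ≤ min (a ^ (1/4 : ℝ)) 1 * c ^ (1/4 : ℝ) := by
      have hc4 : c ^ (1/4 : ℝ) ≤ 1 := Real.rpow_le_one hc0.le hc1.le (by norm_num)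
      have h4 : ∀ x : ℝ, 0 ≤ x → Real.sqrt x = x ^ (1/4 : ℝ) * x ^ (1/4 : ℝ) := by
        intro x hx
        rcases hx.eq_or_lt with h | h
        · simp [← h, Real.zero_rpow (by norm_num : (1/4:ℝ) ≠ 0)]
        · rw [← Real.rpow_add h, Real.sqrt_eq_rpow]
          norm_num
      rcases le_or_gt a 1 with h | h
      · rw [min_eq_left (Real.rpow_le_one ha.le h (by norm_num))]
        rcases le_total a c with hac | hca
        · calc M ≤ Real.sqrt a := hMa
            _ = a ^ (1/4:ℝ) * a ^ (1/4:ℝ) := h4 a ha.le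
            _ ≤ a ^ (1/4:ℝ) * c ^ (1/4:ℝ) :=
                mul_le_mul_of_nonneg_left
                  (Real.rpow_le_rpow ha.le hac (by norm_num)) (by positivity)
        · calc M ≤ Real.sqrt c := hMc
            _ = c ^ (1/4:ℝ) * c ^ (1/4:ℝ) := h4 c hc0.le
            _ ≤ a ^ (1/4:ℝ) * c ^ (1/4:ℝ) :=
                mul_le_mul_of_nonneg_right
                  (Real.rpow_le_rpow hc0.le hca (by norm_num)) (by positivity)
      · rw [min_eq_right (Real.one_le_rpow h.le (by norm_num)), one_mul]
        calc M ≤ Real.sqrt c := hMc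
          _ = c ^ (1/4:ℝ) * c ^ (1/4:ℝ) := h4 c hc0.le
          _ ≤ 1 * c ^ (1/4:ℝ) := mul_le_mul_of_nonneg_right hc4 (by positivity)
          _ = c ^ (1/4:ℝ) := one_mul _
    have hrb : (0:ℝ) ≤ ρ b := rho_nonneg α β b (by linarith)
    have hrc : (0:ℝ) ≤ ρ c := rho_nonneg α β c hc0.le
    have hra : (0:ℝ) ≤ ρ a := rho_nonneg α β a ha.le
    have : Real.sqrt a * W a b c (a + b - c) * ρ a * ρ b * ρ c
        = M * (ρ a * (ρ b * ρ c)) := by rw [hW]; ring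
    rw [Real.norm_eq_abs, this, abs_of_nonneg (by positivity)]
    calc M * (ρ a * (ρ b * ρ c))
        ≤ (min (a ^ (1/4:ℝ)) 1 * c ^ (1/4:ℝ)) * (ρ a * (ρ b * ρ c)) := by
          apply mul_le_mul_of_nonneg_right hkey (by positivity)
      _ = F a * (ρ b * H c) := by simp only [hF, hH]; ring
end

section
/- Suppose f ∈ E_{7/6,7/6}, i.e. sup_{ω>0} ω^{7/6}|f(ω)| < ∞. Then the mass flux satisfies ‖J_M(f)‖_{L^∞(0,∞)} ≤ C ‖f‖_{7/6,7/6}³ and the energy flux satisfies ‖ω^{-1} J_E(f)‖_{L^∞(0,∞)} ≤ C ‖f‖_{7/6,7/6}³ for a universal constant C. -/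
open MeasureTheory Set

/-- Generic flux integral: integrand √ω₁ W f₁ f₂ f₃ over a region S of (ω₁,ω₂,ω₃),
with ω₄ = ω₁+ω₂−ω₃. -/
noncomputable def Jint (f : ℝ → ℝ) (S : Set (ℝ × ℝ × ℝ)) : ℝ :=
  ∫ q in S, Real.sqrt q.1 * W q.1 q.2.1 q.2.2 (q.1 + q.2.1 - q.2.2) *
    f q.1 * f q.2.1 * f q.2.2

/-- Region of J₁(f)(ω). -/
def S1 (ω : ℝ) : Set (ℝ × ℝ × ℝ) :=
  {q | 0 < q.1 ∧ 0 < q.2.1 ∧ q.2.1 < ω ∧ ω < q.2.2 ∧ q.2.2 < q.1 + q.2.1}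

/-- Region of J₂(f)(ω). -/
def S2 (ω : ℝ) : Set (ℝ × ℝ × ℝ) :=
  {q | 0 < q.1 ∧ q.1 < ω ∧ ω - q.1 < q.2.1 ∧ 0 < q.2.2 ∧ q.2.2 < q.1 + q.2.1 - ω}

/-- Region of J₃(f)(ω). -/
def S3 (ω : ℝ) : Set (ℝ × ℝ × ℝ) :=
  {q | 0 < q.1 ∧ ω < q.2.1 ∧ 0 < q.2.2 ∧ q.2.2 < ω}

/-- Region of J₄(f)(ω). -/
def S4 (ω : ℝ) : Set (ℝ × ℝ × ℝ) :=
  {q | ω < q.1 ∧ 0 < q.2.1 ∧ q.1 + q.2.1 - ω < q.2.2 ∧ q.2.2 < q.1 + q.2.1}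

/-- The mass flux J_M = J₁ + J₂ − J₃ − J₄. -/
noncomputable def JM (f : ℝ → ℝ) (ω : ℝ) : ℝ :=
  Jint f (S1 ω) + Jint f (S2 ω) - Jint f (S3 ω) - Jint f (S4 ω)

/-- The energy flux J_E(f)(ω) = ω J_M(f)(ω) − ∫₀^ω J_M(f)(σ) dσ. -/
noncomputable def JE (f : ℝ → ℝ) (ω : ℝ) : ℝ :=
  ω * JM f ω - ∫ σ in Set.Ioo (0:ℝ) ω, JM f σ

/-! ### Auxiliary machinery -/

/-- The minimum kernel min(√ω₁,√ω₂,√ω₃,√ω₄). -/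
noncomputable def mkern (q : ℝ × ℝ × ℝ) : ℝ :=
  min (min (Real.sqrt q.1) (Real.sqrt q.2.1))
    (min (Real.sqrt q.2.2) (Real.sqrt (q.1 + q.2.1 - q.2.2)))

lemma mkern_nonneg (q : ℝ × ℝ × ℝ) : 0 ≤ mkern q :=
  le_min (le_min (Real.sqrt_nonneg _) (Real.sqrt_nonneg _))
    (le_min (Real.sqrt_nonneg _) (Real.sqrt_nonneg _))

lemma mkern_le_sa (q : ℝ × ℝ × ℝ) : mkern q ≤ Real.sqrt q.1 :=
  (min_le_left _ _).trans (min_le_left _ _)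
lemma mkern_le_sb (q : ℝ × ℝ × ℝ) : mkern q ≤ Real.sqrt q.2.1 :=
  (min_le_left _ _).trans (min_le_right _ _)
lemma mkern_le_sc (q : ℝ × ℝ × ℝ) : mkern q ≤ Real.sqrt q.2.2 :=
  (min_le_right _ _).trans (min_le_left _ _)
lemma mkern_le_sd (q : ℝ × ℝ × ℝ) : mkern q ≤ Real.sqrt (q.1 + q.2.1 - q.2.2) :=
  (min_le_right _ _).trans (min_le_right _ _)

/-- The power weight. -/
noncomputable def pw (p₁ p₂ p₃ : ℝ) (q : ℝ × ℝ × ℝ) : ℝ :=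
  q.1 ^ p₁ * q.2.1 ^ p₂ * q.2.2 ^ p₃

lemma quarter {m x y : ℝ} (hm : 0 ≤ m) (hx : 0 ≤ x) (hy : 0 ≤ y)
    (h1 : m ≤ Real.sqrt x) (h2 : m ≤ Real.sqrt y) :
    m ≤ x ^ ((1:ℝ)/4) * y ^ ((1:ℝ)/4) := by
  have hsq : m ^ 2 ≤ Real.sqrt x * Real.sqrt y :=
    (sq m) ▸ mul_le_mul h1 h2 hm (Real.sqrt_nonneg _)
  calc m ≤ Real.sqrt (Real.sqrt x * Real.sqrt y) := Real.le_sqrt_of_sq_le hsq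
    _ = Real.sqrt (Real.sqrt x) * Real.sqrt (Real.sqrt y) :=
        Real.sqrt_mul (Real.sqrt_nonneg _) _
    _ = x ^ ((1:ℝ)/4) * y ^ ((1:ℝ)/4) := by
        rw [Real.sqrt_eq_rpow, Real.sqrt_eq_rpow, Real.sqrt_eq_rpow, Real.sqrt_eq_rpow,
          ← Real.rpow_mul hx, ← Real.rpow_mul hy]
        norm_num

lemma bnd_a (q : ℝ × ℝ × ℝ) :
    mkern q ≤ q.1 ^ ((1:ℝ)/2) * q.2.1 ^ (0:ℝ) * q.2.2 ^ (0:ℝ) := by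
  rw [Real.rpow_zero, Real.rpow_zero, mul_one, mul_one, ← Real.sqrt_eq_rpow]
  exact mkern_le_sa q

lemma bnd_b (q : ℝ × ℝ × ℝ) :
    mkern q ≤ q.1 ^ (0:ℝ) * q.2.1 ^ ((1:ℝ)/2) * q.2.2 ^ (0:ℝ) := by
  rw [Real.rpow_zero, Real.rpow_zero, mul_one, one_mul, ← Real.sqrt_eq_rpow]
  exact mkern_le_sb q

lemma bnd_c (q : ℝ × ℝ × ℝ) :
    mkern q ≤ q.1 ^ (0:ℝ) * q.2.1 ^ (0:ℝ) * q.2.2 ^ ((1:ℝ)/2) := by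
  rw [Real.rpow_zero, Real.rpow_zero, mul_one, one_mul, ← Real.sqrt_eq_rpow]
  exact mkern_le_sc q

lemma bnd_ab (q : ℝ × ℝ × ℝ) (ha : 0 ≤ q.1) (hb : 0 ≤ q.2.1) :
    mkern q ≤ q.1 ^ ((1:ℝ)/4) * q.2.1 ^ ((1:ℝ)/4) * q.2.2 ^ (0:ℝ) := by
  rw [Real.rpow_zero, mul_one]
  exact quarter (mkern_nonneg q) ha hb (mkern_le_sa q) (mkern_le_sb q)

lemma bnd_ac (q : ℝ × ℝ × ℝ) (ha : 0 ≤ q.1) (hc : 0 ≤ q.2.2) :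
    mkern q ≤ q.1 ^ ((1:ℝ)/4) * q.2.1 ^ (0:ℝ) * q.2.2 ^ ((1:ℝ)/4) := by
  rw [Real.rpow_zero, mul_one]
  exact quarter (mkern_nonneg q) ha hc (mkern_le_sa q) (mkern_le_sc q)

lemma bnd_bc (q : ℝ × ℝ × ℝ) (hb : 0 ≤ q.2.1) (hc : 0 ≤ q.2.2) :
    mkern q ≤ q.1 ^ (0:ℝ) * q.2.1 ^ ((1:ℝ)/4) * q.2.2 ^ ((1:ℝ)/4) := by
  rw [Real.rpow_zero, one_mul]
  exact quarter (mkern_nonneg q) hb hc (mkern_le_sb q) (mkern_le_sc q)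

lemma dom_gen {a b c m e₁ e₂ e₃ p₁ p₂ p₃ : ℝ} (ha : 0 < a) (hb : 0 < b) (hc : 0 < c)
    (h : m ≤ a ^ e₁ * b ^ e₂ * c ^ e₃)
    (h₁ : e₁ + (-(7:ℝ)/6) = p₁) (h₂ : e₂ + (-(7:ℝ)/6) = p₂) (h₃ : e₃ + (-(7:ℝ)/6) = p₃) :
    m * (a ^ (-(7:ℝ)/6) * b ^ (-(7:ℝ)/6) * c ^ (-(7:ℝ)/6)) ≤ a ^ p₁ * b ^ p₂ * c ^ p₃ := by
  have h0 : (0:ℝ) ≤ a ^ (-(7:ℝ)/6) * b ^ (-(7:ℝ)/6) * c ^ (-(7:ℝ)/6) := by positivity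
  calc m * (a ^ (-(7:ℝ)/6) * b ^ (-(7:ℝ)/6) * c ^ (-(7:ℝ)/6))
      ≤ (a ^ e₁ * b ^ e₂ * c ^ e₃) * (a ^ (-(7:ℝ)/6) * b ^ (-(7:ℝ)/6) * c ^ (-(7:ℝ)/6)) :=
        mul_le_mul_of_nonneg_right h h0
    _ = a ^ p₁ * b ^ p₂ * c ^ p₃ := by
        rw [← h₁, ← h₂, ← h₃, Real.rpow_add ha, Real.rpow_add hb, Real.rpow_add hc]; ring

lemma f_le {f : ℝ → ℝ} {M : ℝ} (hfM : ∀ ω > (0:ℝ), ω ^ (7/6 : ℝ) * |f ω| ≤ M)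
    {x : ℝ} (hx : 0 < x) : |f x| ≤ M * x ^ (-(7:ℝ)/6) := by
  have hp : (0:ℝ) < x ^ (7/6 : ℝ) := Real.rpow_pos_of_pos hx _
  have h2 : x ^ (-(7:ℝ)/6) = (x ^ (7/6:ℝ))⁻¹ := by
    rw [(by norm_num : (-(7:ℝ)/6) = -(7/6 : ℝ)), Real.rpow_neg hx.le]
  rw [h2, ← div_eq_mul_inv, le_div_iff₀ hp]
  linarith [hfM x hx]

/-- Master bound: if a nonnegative integrable `H` dominates the kernel on `S`, then
`|Jint f S| ≤ M³ ∫ H`. -/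
lemma jint_bound (f : ℝ → ℝ) {M : ℝ} (hM : 0 ≤ M)
    (hfM : ∀ ω > (0:ℝ), ω ^ (7/6 : ℝ) * |f ω| ≤ M)
    {S : Set (ℝ × ℝ × ℝ)} (hS : MeasurableSet S)
    (hSpos : ∀ q ∈ S, 0 < q.1 ∧ 0 < q.2.1 ∧ 0 < q.2.2)
    {H : ℝ × ℝ × ℝ → ℝ} (HInt : Integrable H) (Hnn : ∀ q, 0 ≤ H q)
    (Hdom : ∀ q ∈ S, mkern q * pw (-(7:ℝ)/6) (-(7:ℝ)/6) (-(7:ℝ)/6) q ≤ H q) :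
    |Jint f S| ≤ M ^ 3 * ∫ q, H q := by
  have key : ∀ q ∈ S, |Real.sqrt q.1 * W q.1 q.2.1 q.2.2 (q.1 + q.2.1 - q.2.2) *
      f q.1 * f q.2.1 * f q.2.2| ≤ M ^ 3 * H q := by
    rintro ⟨a, b, c⟩ hq
    obtain ⟨ha, hb, hc⟩ := hSpos _ hq
    have hsa : Real.sqrt a ≠ 0 := (Real.sqrt_pos.2 ha).ne'
    have hW : Real.sqrt a * W a b c (a + b - c) = mkern (a, b, c) := by
      unfold W mkern; field_simp
    have e : Real.sqrt a * W a b c (a + b - c) * f a * f b * f c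
        = mkern (a, b, c) * f a * f b * f c := by rw [hW]
    rw [e, abs_mul, abs_mul, abs_mul, abs_of_nonneg (mkern_nonneg _)]
    have h1 := f_le hfM ha
    have h2 := f_le hfM hb
    have h3 := f_le hfM hc
    have hma : (0:ℝ) ≤ M * a ^ (-(7:ℝ)/6) := by positivity
    have hmb : (0:ℝ) ≤ M * b ^ (-(7:ℝ)/6) := by positivity
    calc mkern (a,b,c) * |f a| * |f b| * |f c|
        ≤ mkern (a,b,c) * (M * a ^ (-(7:ℝ)/6)) * (M * b ^ (-(7:ℝ)/6)) * (M * c ^ (-(7:ℝ)/6)) := by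
          refine mul_le_mul (mul_le_mul (mul_le_mul le_rfl h1 (abs_nonneg _) (mkern_nonneg _))
            h2 (abs_nonneg _) (mul_nonneg (mkern_nonneg _) hma)) h3 (abs_nonneg _)
            (mul_nonneg (mul_nonneg (mkern_nonneg _) hma) hmb)
      _ = M ^ 3 * (mkern (a,b,c) * pw (-(7:ℝ)/6) (-(7:ℝ)/6) (-(7:ℝ)/6) (a,b,c)) := by
          unfold pw; ring
      _ ≤ M ^ 3 * H (a,b,c) := by
          apply mul_le_mul_of_nonneg_left (Hdom _ hq) (by positivity)
  have step1 : |Jint f S| ≤ ∫ q in S, |Real.sqrt q.1 * W q.1 q.2.1 q.2.2 (q.1 + q.2.1 - q.2.2) *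
      f q.1 * f q.2.1 * f q.2.2| := by
    unfold Jint
    simpa only [Real.norm_eq_abs] using norm_integral_le_integral_norm (μ := volume.restrict S)
      (f := fun q : ℝ × ℝ × ℝ => Real.sqrt q.1 * W q.1 q.2.1 q.2.2 (q.1 + q.2.1 - q.2.2) *
        f q.1 * f q.2.1 * f q.2.2)
  have step2 : (∫ q in S, |Real.sqrt q.1 * W q.1 q.2.1 q.2.2 (q.1 + q.2.1 - q.2.2) *
      f q.1 * f q.2.1 * f q.2.2|) ≤ ∫ q in S, M ^ 3 * H q := by
    apply integral_mono_of_nonneg (ae_of_all _ fun q => abs_nonneg _)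
      ((HInt.const_mul _).restrict)
    exact (ae_restrict_iff' hS).2 (ae_of_all _ key)
  have step3 : (∫ q in S, M ^ 3 * H q) = M ^ 3 * ∫ q in S, H q := integral_const_mul _ _
  have step4 : (∫ q in S, H q) ≤ ∫ q, H q :=
    setIntegral_le_integral HInt (ae_of_all _ Hnn)
  calc |Jint f S| ≤ ∫ q in S, |_| := step1
    _ ≤ ∫ q in S, M ^ 3 * H q := step2
    _ = M ^ 3 * ∫ q in S, H q := step3
    _ ≤ M ^ 3 * ∫ q, H q := by
        apply mul_le_mul_of_nonneg_left step4 (by positivity)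

/-! ### One-dimensional integrals -/

lemma ioc_int {r p : ℝ} (hr : 0 < r) (hp : -1 < p) :
    IntegrableOn (fun x : ℝ => x ^ p) (Ioc 0 r) volume ∧
    ∫ x in Ioc (0:ℝ) r, x ^ p = r ^ (p+1) / (p+1) := by
  constructor
  · exact (intervalIntegral.intervalIntegrable_rpow' hp (a := 0) (b := r)).1
  · rw [← intervalIntegral.integral_of_le hr.le, integral_rpow (Or.inl hp),
      Real.zero_rpow (by linarith : p + 1 ≠ 0)]
    ring

lemma ioi_int {r : ℝ} (hr : 0 < r) :
    IntegrableOn (fun x : ℝ => x ^ (-(7:ℝ)/6)) (Ioi r) volume ∧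
    ∫ x in Ioi r, x ^ (-(7:ℝ)/6) = 6 * r ^ (-(1:ℝ)/6) := by
  have h : (-(7:ℝ)/6) < -1 := by norm_num
  refine ⟨integrableOn_Ioi_rpow_of_lt h hr, ?_⟩
  rw [integral_Ioi_rpow_of_lt h hr, (by norm_num : (-(7:ℝ)/6 + 1) = -(1:ℝ)/6)]
  ring

/-- A "factor": a 1D function integrable on a set, nonneg there, with integral ≤ 36 ω^e. -/
def Fac (ω e : ℝ) (g : ℝ → ℝ) (A : Set ℝ) : Prop :=
  IntegrableOn g A volume ∧ (∀ x ∈ A, 0 ≤ g x) ∧ (∫ x in A, g x ≤ 36 * ω ^ e)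

lemma fac_Ioc {ω r p e : ℝ} (hω : 0 < ω) (hr : ω ≤ r) (hr3 : r ≤ 3*ω)
    (hp : -1 < p) (hp12 : 1/12 ≤ p+1) (hp1 : p+1 ≤ 1) (he : e = p+1) :
    Fac ω e (fun x => x ^ p) (Ioc 0 r) := by
  have hr0 : 0 < r := hω.trans_le hr
  obtain ⟨hint, hval⟩ := ioc_int hr0 hp
  refine ⟨hint, fun x hx => Real.rpow_nonneg hx.1.le _, ?_⟩
  rw [hval, he]
  have h1 : r ^ (p+1) ≤ (3*ω) ^ (p+1) := Real.rpow_le_rpow hr0.le hr3 (by linarith)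
  have h2 : (3*ω) ^ (p+1) = 3 ^ (p+1) * ω ^ (p+1) := Real.mul_rpow (by norm_num) hω.le
  have h3 : (3:ℝ) ^ (p+1) ≤ 3 := by
    calc (3:ℝ) ^ (p+1) ≤ 3 ^ (1:ℝ) := Real.rpow_le_rpow_of_exponent_le (by norm_num) hp1
      _ = 3 := Real.rpow_one 3
  have hω0 : (0:ℝ) ≤ ω ^ (p+1) := Real.rpow_nonneg hω.le _
  have h4 : r ^ (p+1) ≤ 3 * ω ^ (p+1) := by
    calc r ^ (p+1) ≤ 3 ^ (p+1) * ω ^ (p+1) := h2 ▸ h1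
      _ ≤ 3 * ω ^ (p+1) := mul_le_mul_of_nonneg_right h3 hω0
  rw [div_le_iff₀ (by linarith : (0:ℝ) < p+1)]
  calc r ^ (p+1) ≤ 3 * ω ^ (p+1) := h4
    _ ≤ 36 * ω ^ (p+1) * (p+1) := by nlinarith

lemma fac_Ioi {ω r : ℝ} (hω : 0 < ω) (hr : ω/2 ≤ r) :
    Fac ω (-(1:ℝ)/6) (fun x => x ^ (-(7:ℝ)/6)) (Ioi r) := by
  have hr0 : 0 < r := by linarith
  obtain ⟨hint, hval⟩ := ioi_int hr0
  refine ⟨hint, fun x hx => Real.rpow_nonneg (hr0.trans hx).le _, ?_⟩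
  rw [hval]
  have key : r ^ (-(1:ℝ)/6) ≤ 2 * ω ^ (-(1:ℝ)/6) := by
    have h1 : r ^ (-(1:ℝ)/6) ≤ (ω/2) ^ (-(1:ℝ)/6) := by
      rw [(by norm_num : (-(1:ℝ)/6) = -(1/6 : ℝ)), Real.rpow_neg hr0.le,
        Real.rpow_neg (by linarith : (0:ℝ) ≤ ω/2)]
      apply inv_anti₀ (Real.rpow_pos_of_pos (by linarith) _)
      exact Real.rpow_le_rpow (by linarith) hr (by norm_num)
    have h2 : (ω/2) ^ (-(1:ℝ)/6) = (2:ℝ) ^ ((1:ℝ)/6) * ω ^ (-(1:ℝ)/6) := by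
      rw [div_eq_mul_inv, Real.mul_rpow hω.le (by norm_num),
        Real.inv_rpow (by norm_num : (0:ℝ) ≤ 2), ← Real.rpow_neg (by norm_num : (0:ℝ) ≤ 2)]
      norm_num; ring
    have h3 : (2:ℝ) ^ ((1:ℝ)/6) ≤ 2 := by
      calc (2:ℝ) ^ ((1:ℝ)/6) ≤ 2 ^ (1:ℝ) :=
          Real.rpow_le_rpow_of_exponent_le (by norm_num) (by norm_num)
        _ = 2 := Real.rpow_one 2
    have hω0 : (0:ℝ) ≤ ω ^ (-(1:ℝ)/6) := Real.rpow_nonneg hω.le _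
    calc r ^ (-(1:ℝ)/6) ≤ (2:ℝ) ^ ((1:ℝ)/6) * ω ^ (-(1:ℝ)/6) := h2 ▸ h1
      _ ≤ 2 * ω ^ (-(1:ℝ)/6) := mul_le_mul_of_nonneg_right h3 hω0
  linarith [Real.rpow_nonneg hω.le (-(1:ℝ)/6)]

lemma fac_sqrt {ω : ℝ} (hω : 0 < ω) :
    Fac ω ((1:ℝ)/3) (fun x => Real.sqrt ω * x ^ (-(7:ℝ)/6)) (Ioi ω) := by
  obtain ⟨hint, hval⟩ := ioi_int hω
  refine ⟨hint.const_mul _, fun x hx => mul_nonneg (Real.sqrt_nonneg _)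
    (Real.rpow_nonneg (hω.trans hx).le _), ?_⟩
  rw [MeasureTheory.integral_const_mul, hval, Real.sqrt_eq_rpow]
  have e : ω ^ ((1:ℝ)/2) * (6 * ω ^ (-(1:ℝ)/6)) = 6 * ω ^ ((1:ℝ)/3) := by
    rw [mul_comm, mul_assoc, ← Real.rpow_add hω]
    norm_num
  rw [e]
  have hω0 : (0:ℝ) ≤ ω ^ ((1:ℝ)/3) := Real.rpow_nonneg hω.le _
  linarith

/-! ### Product pieces -/

lemma prod3 {g₁ g₂ g₃ : ℝ → ℝ} {A B C : Set ℝ}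
    (h₁ : IntegrableOn g₁ A) (h₂ : IntegrableOn g₂ B) (h₃ : IntegrableOn g₃ C) :
    IntegrableOn (fun q : ℝ × ℝ × ℝ => g₁ q.1 * g₂ q.2.1 * g₃ q.2.2) (A ×ˢ B ×ˢ C) volume ∧
    ∫ q in A ×ˢ B ×ˢ C, g₁ q.1 * g₂ q.2.1 * g₃ q.2.2 =
      (∫ x in A, g₁ x) * (∫ x in B, g₂ x) * (∫ x in C, g₃ x) := by
  have e1 : (volume : Measure (ℝ × ℝ × ℝ)).restrict (A ×ˢ B ×ˢ C)
      = (volume.restrict A).prod ((volume.restrict B).prod (volume.restrict C)) := by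
    rw [Measure.prod_restrict, Measure.prod_restrict, ← Measure.volume_eq_prod,
      ← Measure.volume_eq_prod]
  have h23 : Integrable (fun p : ℝ × ℝ => g₂ p.1 * g₃ p.2)
      ((volume.restrict B).prod (volume.restrict C)) := h₂.mul_prod h₃
  have hI : Integrable (fun q : ℝ × ℝ × ℝ => g₁ q.1 * (g₂ q.2.1 * g₃ q.2.2))
      ((volume.restrict A).prod ((volume.restrict B).prod (volume.restrict C))) :=
    h₁.mul_prod h23
  constructor
  · unfold IntegrableOn
    rw [e1]
    simpa [mul_assoc] using hI
  · rw [e1]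
    have h := integral_prod_mul (μ := volume.restrict A)
      (ν := (volume.restrict B).prod (volume.restrict C)) g₁
      (fun p : ℝ × ℝ => g₂ p.1 * g₃ p.2)
    rw [integral_prod_mul] at h
    simpa [mul_assoc] using h

/-- Bound for one indicator piece. -/
lemma piece_bound {ω : ℝ} (hω : 0 < ω) {g₁ g₂ g₃ : ℝ → ℝ} {A B C : Set ℝ}
    (mA : MeasurableSet A) (mB : MeasurableSet B) (mC : MeasurableSet C)
    {e₁ e₂ e₃ : ℝ} (h₁ : Fac ω e₁ g₁ A) (h₂ : Fac ω e₂ g₂ B) (h₃ : Fac ω e₃ g₃ C)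
    (he : e₁ + e₂ + e₃ = 0) :
    Integrable ((A ×ˢ B ×ˢ C).indicator (fun q : ℝ × ℝ × ℝ => g₁ q.1 * g₂ q.2.1 * g₃ q.2.2))
      volume ∧
    (∀ q, 0 ≤ (A ×ˢ B ×ˢ C).indicator (fun q : ℝ × ℝ × ℝ => g₁ q.1 * g₂ q.2.1 * g₃ q.2.2) q) ∧
    ∫ q, (A ×ˢ B ×ˢ C).indicator (fun q : ℝ × ℝ × ℝ => g₁ q.1 * g₂ q.2.1 * g₃ q.2.2) q
      ≤ 46656 := by
  have mP : MeasurableSet (A ×ˢ B ×ˢ C) := mA.prod (mB.prod mC)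
  obtain ⟨hint, hval⟩ := prod3 h₁.1 h₂.1 h₃.1
  have v₁0 : 0 ≤ ∫ x in A, g₁ x := setIntegral_nonneg mA h₁.2.1
  have v₂0 : 0 ≤ ∫ x in B, g₂ x := setIntegral_nonneg mB h₂.2.1
  have v₃0 : 0 ≤ ∫ x in C, g₃ x := setIntegral_nonneg mC h₃.2.1
  refine ⟨hint.integrable_indicator mP, ?_, ?_⟩
  · intro q
    apply Set.indicator_nonneg
    rintro ⟨a, b, c⟩ ⟨hqa, hqb, hqc⟩
    exact mul_nonneg (mul_nonneg (h₁.2.1 a hqa) (h₂.2.1 b hqb)) (h₃.2.1 c hqc)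
  · rw [integral_indicator mP, hval]
    have hω₁ : (0:ℝ) ≤ 36 * ω ^ e₁ := by positivity
    have hω₂ : (0:ℝ) ≤ 36 * ω ^ e₂ := by positivity
    calc (∫ x in A, g₁ x) * (∫ x in B, g₂ x) * (∫ x in C, g₃ x)
        ≤ (36 * ω ^ e₁) * (36 * ω ^ e₂) * (36 * ω ^ e₃) :=
          mul_le_mul (mul_le_mul h₁.2.2 h₂.2.2 v₂0 hω₁) h₃.2.2 v₃0 (mul_nonneg hω₁ hω₂)
      _ = 46656 * ω ^ (e₁ + e₂ + e₃) := by
          rw [Real.rpow_add hω, Real.rpow_add hω]; ring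
      _ = 46656 := by rw [he, Real.rpow_zero, mul_one]

/-- Region bound via three product pieces. -/
lemma region_bound (f : ℝ → ℝ) {M : ℝ} (hM : 0 ≤ M)
    (hfM : ∀ ω > (0:ℝ), ω ^ (7/6 : ℝ) * |f ω| ≤ M)
    {S : Set (ℝ × ℝ × ℝ)} (hS : MeasurableSet S)
    (hSpos : ∀ q ∈ S, 0 < q.1 ∧ 0 < q.2.1 ∧ 0 < q.2.2)
    {H₁ H₂ H₃ : ℝ × ℝ × ℝ → ℝ}
    (i₁ : Integrable H₁ ∧ (∀ q, 0 ≤ H₁ q) ∧ ∫ q, H₁ q ≤ 46656)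
    (i₂ : Integrable H₂ ∧ (∀ q, 0 ≤ H₂ q) ∧ ∫ q, H₂ q ≤ 46656)
    (i₃ : Integrable H₃ ∧ (∀ q, 0 ≤ H₃ q) ∧ ∫ q, H₃ q ≤ 46656)
    (dom : ∀ q ∈ S, mkern q * pw (-(7:ℝ)/6) (-(7:ℝ)/6) (-(7:ℝ)/6) q ≤ H₁ q + H₂ q + H₃ q) :
    |Jint f S| ≤ 139968 * M ^ 3 := by
  have HInt : Integrable (fun q => H₁ q + H₂ q + H₃ q) := (i₁.1.add i₂.1).add i₃.1
  have Hnn : ∀ q, 0 ≤ H₁ q + H₂ q + H₃ q := fun q => by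
    have := i₁.2.1 q; have := i₂.2.1 q; have := i₃.2.1 q; linarith
  have hb := jint_bound f hM hfM hS hSpos HInt Hnn dom
  have hv : (∫ q, (H₁ q + H₂ q + H₃ q)) ≤ 139968 := by
    have h12 : Integrable (fun q => H₁ q + H₂ q) volume := i₁.1.add i₂.1
    have e := integral_add h12 i₃.1
    rw [integral_add i₁.1 i₂.1] at e
    rw [e]
    linarith [i₁.2.2, i₂.2.2, i₃.2.2]
  calc |Jint f S| ≤ M ^ 3 * ∫ q, (H₁ q + H₂ q + H₃ q) := hb
    _ ≤ M ^ 3 * 139968 := mul_le_mul_of_nonneg_left hv (by positivity)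
    _ = 139968 * M ^ 3 := by ring

/-! ### The pieces -/

noncomputable def g76 : ℝ → ℝ := fun x => x ^ (-(7:ℝ)/6)
noncomputable def g1112 : ℝ → ℝ := fun x => x ^ (-(11:ℝ)/12)
noncomputable def g23 : ℝ → ℝ := fun x => x ^ (-(2:ℝ)/3)
noncomputable def gw (ω : ℝ) : ℝ → ℝ := fun x => Real.sqrt ω * x ^ (-(7:ℝ)/6)

noncomputable def ind3 (A B C : Set ℝ) (g₁ g₂ g₃ : ℝ → ℝ) : ℝ × ℝ × ℝ → ℝ :=
  (A ×ˢ B ×ˢ C).indicator (fun q => g₁ q.1 * g₂ q.2.1 * g₃ q.2.2)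

lemma ind3_mem {A B C : Set ℝ} {g₁ g₂ g₃ : ℝ → ℝ} {q : ℝ × ℝ × ℝ} (h : q ∈ A ×ˢ B ×ˢ C) :
    ind3 A B C g₁ g₂ g₃ q = g₁ q.1 * g₂ q.2.1 * g₃ q.2.2 := Set.indicator_of_mem h _

/-- `piece_bound` in `ind3` form. -/
lemma piece_bound' {ω : ℝ} (hω : 0 < ω) {g₁ g₂ g₃ : ℝ → ℝ} {A B C : Set ℝ}
    (mA : MeasurableSet A) (mB : MeasurableSet B) (mC : MeasurableSet C)
    {e₁ e₂ e₃ : ℝ} (h₁ : Fac ω e₁ g₁ A) (h₂ : Fac ω e₂ g₂ B) (h₃ : Fac ω e₃ g₃ C)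
    (he : e₁ + e₂ + e₃ = 0) :
    Integrable (ind3 A B C g₁ g₂ g₃) volume ∧
    (∀ q, 0 ≤ ind3 A B C g₁ g₂ g₃ q) ∧ ∫ q, ind3 A B C g₁ g₂ g₃ q ≤ 46656 :=
  piece_bound hω mA mB mC h₁ h₂ h₃ he

lemma bound_S1 (f : ℝ → ℝ) {M : ℝ} (hM : 0 ≤ M)
    (hfM : ∀ ω > (0:ℝ), ω ^ (7/6 : ℝ) * |f ω| ≤ M) {ω : ℝ} (hω : 0 < ω) :
    |Jint f (S1 ω)| ≤ 139968 * M ^ 3 := by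
  have mIoc : MeasurableSet (Ioc (0:ℝ) ω) := measurableSet_Ioc
  have mIoi : MeasurableSet (Ioi ω) := measurableSet_Ioi
  have f1 : Fac ω ((1:ℝ)/12) g1112 (Ioc 0 ω) :=
    fac_Ioc hω le_rfl (by linarith) (by norm_num) (by norm_num) (by norm_num) (by norm_num)
  have f2 : Fac ω ((1:ℝ)/3) g23 (Ioc 0 ω) :=
    fac_Ioc hω le_rfl (by linarith) (by norm_num) (by norm_num) (by norm_num) (by norm_num)
  have f3 : Fac ω (-(1:ℝ)/6) g76 (Ioi ω) := fac_Ioi hω (by linarith)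
  have p₁ := piece_bound' hω mIoc mIoc mIoi f1 f1 f3 (by norm_num)
  have p₂ := piece_bound' hω mIoi mIoc mIoi f3 f2 f3 (by norm_num)
  have hS : MeasurableSet (S1 ω) := by
    have ma : Measurable fun q : ℝ × ℝ × ℝ => q.1 := measurable_fst
    have mb : Measurable fun q : ℝ × ℝ × ℝ => q.2.1 := measurable_snd.fst
    have mc : Measurable fun q : ℝ × ℝ × ℝ => q.2.2 := measurable_snd.snd
    exact (measurableSet_lt measurable_const ma).inter
      ((measurableSet_lt measurable_const mb).inter
      ((measurableSet_lt mb measurable_const).inter ((measurableSet_lt measurable_const mc).inter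
      (measurableSet_lt mc (ma.add mb)))))
  refine region_bound f hM hfM hS ?_ p₁ p₂ p₂ ?_
  · rintro q ⟨ha, hb, _, hωc, _⟩; exact ⟨ha, hb, hω.trans hωc⟩
  · rintro q ⟨ha, hb, hbω, hωc, hcab⟩
    have hc : 0 < q.2.2 := hω.trans hωc
    have n₁ := p₁.2.1 q
    have n₂ := p₂.2.1 q
    simp only [pw]
    rcases le_or_gt q.1 ω with haω | haω
    · have hmem : q ∈ Ioc (0:ℝ) ω ×ˢ Ioc (0:ℝ) ω ×ˢ Ioi ω := ⟨⟨ha, haω⟩, ⟨hb, hbω.le⟩, hωc⟩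
      have e₁ : ind3 (Ioc 0 ω) (Ioc 0 ω) (Ioi ω) g1112 g1112 g76 q
          = g1112 q.1 * g1112 q.2.1 * g76 q.2.2 := ind3_mem hmem
      have hle : mkern q * (q.1 ^ (-(7:ℝ)/6) * q.2.1 ^ (-(7:ℝ)/6) * q.2.2 ^ (-(7:ℝ)/6))
          ≤ g1112 q.1 * g1112 q.2.1 * g76 q.2.2 :=
        dom_gen ha hb hc (bnd_ab q ha.le hb.le) (by norm_num) (by norm_num) (by norm_num)
      linarith
    · have hmem : q ∈ Ioi ω ×ˢ Ioc (0:ℝ) ω ×ˢ Ioi ω := ⟨haω, ⟨hb, hbω.le⟩, hωc⟩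
      have e₂ : ind3 (Ioi ω) (Ioc 0 ω) (Ioi ω) g76 g23 g76 q
          = g76 q.1 * g23 q.2.1 * g76 q.2.2 := ind3_mem hmem
      have hle : mkern q * (q.1 ^ (-(7:ℝ)/6) * q.2.1 ^ (-(7:ℝ)/6) * q.2.2 ^ (-(7:ℝ)/6))
          ≤ g76 q.1 * g23 q.2.1 * g76 q.2.2 :=
        dom_gen ha hb hc (bnd_b q) (by norm_num) (by norm_num) (by norm_num)
      linarith

lemma bound_S3 (f : ℝ → ℝ) {M : ℝ} (hM : 0 ≤ M)
    (hfM : ∀ ω > (0:ℝ), ω ^ (7/6 : ℝ) * |f ω| ≤ M) {ω : ℝ} (hω : 0 < ω) :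
    |Jint f (S3 ω)| ≤ 139968 * M ^ 3 := by
  have mIoc : MeasurableSet (Ioc (0:ℝ) ω) := measurableSet_Ioc
  have mIoi : MeasurableSet (Ioi ω) := measurableSet_Ioi
  have f1 : Fac ω ((1:ℝ)/12) g1112 (Ioc 0 ω) :=
    fac_Ioc hω le_rfl (by linarith) (by norm_num) (by norm_num) (by norm_num) (by norm_num)
  have f2 : Fac ω ((1:ℝ)/3) g23 (Ioc 0 ω) :=
    fac_Ioc hω le_rfl (by linarith) (by norm_num) (by norm_num) (by norm_num) (by norm_num)
  have f3 : Fac ω (-(1:ℝ)/6) g76 (Ioi ω) := fac_Ioi hω (by linarith)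
  have p₁ := piece_bound' hω mIoc mIoi mIoc f1 f3 f1 (by norm_num)
  have p₂ := piece_bound' hω mIoi mIoi mIoc f3 f3 f2 (by norm_num)
  have hS : MeasurableSet (S3 ω) := by
    have ma : Measurable fun q : ℝ × ℝ × ℝ => q.1 := measurable_fst
    have mb : Measurable fun q : ℝ × ℝ × ℝ => q.2.1 := measurable_snd.fst
    have mc : Measurable fun q : ℝ × ℝ × ℝ => q.2.2 := measurable_snd.snd
    exact (measurableSet_lt measurable_const ma).inter
      ((measurableSet_lt measurable_const mb).inter
      ((measurableSet_lt measurable_const mc).inter (measurableSet_lt mc measurable_const)))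
  refine region_bound f hM hfM hS ?_ p₁ p₂ p₂ ?_
  · rintro q ⟨ha, hωb, hc, _⟩; exact ⟨ha, hω.trans hωb, hc⟩
  · rintro q ⟨ha, hωb, hc, hcω⟩
    have hb : 0 < q.2.1 := hω.trans hωb
    have n₁ := p₁.2.1 q
    have n₂ := p₂.2.1 q
    simp only [pw]
    rcases le_or_gt q.1 ω with haω | haω
    · have hmem : q ∈ Ioc (0:ℝ) ω ×ˢ Ioi ω ×ˢ Ioc (0:ℝ) ω := ⟨⟨ha, haω⟩, hωb, ⟨hc, hcω.le⟩⟩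
      have e₁ : ind3 (Ioc 0 ω) (Ioi ω) (Ioc 0 ω) g1112 g76 g1112 q
          = g1112 q.1 * g76 q.2.1 * g1112 q.2.2 := ind3_mem hmem
      have hle : mkern q * (q.1 ^ (-(7:ℝ)/6) * q.2.1 ^ (-(7:ℝ)/6) * q.2.2 ^ (-(7:ℝ)/6))
          ≤ g1112 q.1 * g76 q.2.1 * g1112 q.2.2 :=
        dom_gen ha hb hc (bnd_ac q ha.le hc.le) (by norm_num) (by norm_num) (by norm_num)
      linarith
    · have hmem : q ∈ Ioi ω ×ˢ Ioi ω ×ˢ Ioc (0:ℝ) ω := ⟨haω, hωb, ⟨hc, hcω.le⟩⟩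
      have e₂ : ind3 (Ioi ω) (Ioi ω) (Ioc 0 ω) g76 g76 g23 q
          = g76 q.1 * g76 q.2.1 * g23 q.2.2 := ind3_mem hmem
      have hle : mkern q * (q.1 ^ (-(7:ℝ)/6) * q.2.1 ^ (-(7:ℝ)/6) * q.2.2 ^ (-(7:ℝ)/6))
          ≤ g76 q.1 * g76 q.2.1 * g23 q.2.2 :=
        dom_gen ha hb hc (bnd_c q) (by norm_num) (by norm_num) (by norm_num)
      linarith

lemma bound_S2 (f : ℝ → ℝ) {M : ℝ} (hM : 0 ≤ M)
    (hfM : ∀ ω > (0:ℝ), ω ^ (7/6 : ℝ) * |f ω| ≤ M) {ω : ℝ} (hω : 0 < ω) :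
    |Jint f (S2 ω)| ≤ 139968 * M ^ 3 := by
  have mIoc : MeasurableSet (Ioc (0:ℝ) ω) := measurableSet_Ioc
  have mIoi : MeasurableSet (Ioi ω) := measurableSet_Ioi
  have mIoih : MeasurableSet (Ioi (ω/2)) := measurableSet_Ioi
  have f1 : Fac ω ((1:ℝ)/12) g1112 (Ioc 0 ω) :=
    fac_Ioc hω le_rfl (by linarith) (by norm_num) (by norm_num) (by norm_num) (by norm_num)
  have f2 : Fac ω ((1:ℝ)/3) g23 (Ioc 0 ω) :=
    fac_Ioc hω le_rfl (by linarith) (by norm_num) (by norm_num) (by norm_num) (by norm_num)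
  have f3 : Fac ω (-(1:ℝ)/6) g76 (Ioi ω) := fac_Ioi hω (by linarith)
  have f3h : Fac ω (-(1:ℝ)/6) g76 (Ioi (ω/2)) := fac_Ioi hω le_rfl
  have p₁ := piece_bound' hω mIoc mIoi mIoih f2 f3 f3h (by norm_num)
  have p₂ := piece_bound' hω mIoc mIoih mIoc f1 f3h f1 (by norm_num)
  have p₃ := piece_bound' hω mIoih mIoc mIoc f3h f1 f1 (by norm_num)
  have hS : MeasurableSet (S2 ω) := by
    have ma : Measurable fun q : ℝ × ℝ × ℝ => q.1 := measurable_fst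
    have mb : Measurable fun q : ℝ × ℝ × ℝ => q.2.1 := measurable_snd.fst
    have mc : Measurable fun q : ℝ × ℝ × ℝ => q.2.2 := measurable_snd.snd
    exact (measurableSet_lt measurable_const ma).inter
      ((measurableSet_lt ma measurable_const).inter
      ((measurableSet_lt ((measurable_const.sub ma)) mb).inter
      ((measurableSet_lt measurable_const mc).inter
      (measurableSet_lt mc ((ma.add mb).sub measurable_const)))))
  refine region_bound f hM hfM hS ?_ p₁ p₂ p₃ ?_
  · rintro q ⟨ha, haω, hbgt, hc, _⟩
    exact ⟨ha, by linarith, hc⟩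
  · rintro q ⟨ha, haω, hbgt, hc, hlt⟩
    have hb : 0 < q.2.1 := by linarith
    have n₁ := p₁.2.1 q
    have n₂ := p₂.2.1 q
    have n₃ := p₃.2.1 q
    simp only [pw]
    rcases le_or_gt ω q.2.2 with hcw | hcw
    · have hmem : q ∈ Ioc (0:ℝ) ω ×ˢ Ioi ω ×ˢ Ioi (ω/2) :=
        ⟨⟨ha, haω.le⟩, Set.mem_Ioi.mpr (by linarith), Set.mem_Ioi.mpr (by linarith)⟩
      have e₁ : ind3 (Ioc 0 ω) (Ioi ω) (Ioi (ω/2)) g23 g76 g76 q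
          = g23 q.1 * g76 q.2.1 * g76 q.2.2 := ind3_mem hmem
      have hle : mkern q * (q.1 ^ (-(7:ℝ)/6) * q.2.1 ^ (-(7:ℝ)/6) * q.2.2 ^ (-(7:ℝ)/6))
          ≤ g23 q.1 * g76 q.2.1 * g76 q.2.2 :=
        dom_gen ha hb hc (bnd_a q) (by norm_num) (by norm_num) (by norm_num)
      linarith
    · rcases lt_or_ge (ω/2) q.2.1 with hbw | hbw
      · have hmem : q ∈ Ioc (0:ℝ) ω ×ˢ Ioi (ω/2) ×ˢ Ioc (0:ℝ) ω :=
          ⟨⟨ha, haω.le⟩, hbw, ⟨hc, hcw.le⟩⟩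
        have e₂ : ind3 (Ioc 0 ω) (Ioi (ω/2)) (Ioc 0 ω) g1112 g76 g1112 q
            = g1112 q.1 * g76 q.2.1 * g1112 q.2.2 := ind3_mem hmem
        have hle : mkern q * (q.1 ^ (-(7:ℝ)/6) * q.2.1 ^ (-(7:ℝ)/6) * q.2.2 ^ (-(7:ℝ)/6))
            ≤ g1112 q.1 * g76 q.2.1 * g1112 q.2.2 :=
          dom_gen ha hb hc (bnd_ac q ha.le hc.le) (by norm_num) (by norm_num) (by norm_num)
        linarith
      · have hmem : q ∈ Ioi (ω/2) ×ˢ Ioc (0:ℝ) ω ×ˢ Ioc (0:ℝ) ω :=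
          ⟨Set.mem_Ioi.mpr (by linarith), ⟨hb, by linarith⟩, ⟨hc, hcw.le⟩⟩
        have e₃ : ind3 (Ioi (ω/2)) (Ioc 0 ω) (Ioc 0 ω) g76 g1112 g1112 q
            = g76 q.1 * g1112 q.2.1 * g1112 q.2.2 := ind3_mem hmem
        have hle : mkern q * (q.1 ^ (-(7:ℝ)/6) * q.2.1 ^ (-(7:ℝ)/6) * q.2.2 ^ (-(7:ℝ)/6))
            ≤ g76 q.1 * g1112 q.2.1 * g1112 q.2.2 :=
          dom_gen ha hb hc (bnd_bc q hb.le hc.le) (by norm_num) (by norm_num) (by norm_num)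
        linarith

lemma bound_S4 (f : ℝ → ℝ) {M : ℝ} (hM : 0 ≤ M)
    (hfM : ∀ ω > (0:ℝ), ω ^ (7/6 : ℝ) * |f ω| ≤ M) {ω : ℝ} (hω : 0 < ω) :
    |Jint f (S4 ω)| ≤ 139968 * M ^ 3 := by
  have mIoc : MeasurableSet (Ioc (0:ℝ) ω) := measurableSet_Ioc
  have mIoc3 : MeasurableSet (Ioc (0:ℝ) (3*ω)) := measurableSet_Ioc
  have mIoi : MeasurableSet (Ioi ω) := measurableSet_Ioi
  have mIoih : MeasurableSet (Ioi (ω/2)) := measurableSet_Ioi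
  have f1 : Fac ω ((1:ℝ)/12) g1112 (Ioc 0 ω) :=
    fac_Ioc hω le_rfl (by linarith) (by norm_num) (by norm_num) (by norm_num) (by norm_num)
  have f13 : Fac ω ((1:ℝ)/12) g1112 (Ioc 0 (3*ω)) :=
    fac_Ioc hω (by linarith) le_rfl (by norm_num) (by norm_num) (by norm_num) (by norm_num)
  have f2 : Fac ω ((1:ℝ)/3) g23 (Ioc 0 ω) :=
    fac_Ioc hω le_rfl (by linarith) (by norm_num) (by norm_num) (by norm_num) (by norm_num)
  have f3 : Fac ω (-(1:ℝ)/6) g76 (Ioi ω) := fac_Ioi hω (by linarith)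
  have f3h : Fac ω (-(1:ℝ)/6) g76 (Ioi (ω/2)) := fac_Ioi hω le_rfl
  have fw : Fac ω ((1:ℝ)/3) (gw ω) (Ioi ω) := fac_sqrt hω
  have p₁ := piece_bound' hω mIoi mIoih mIoi fw f3h f3 (by norm_num)
  have p₂ := piece_bound' hω mIoi mIoc mIoi f3 f2 f3 (by norm_num)
  have p₃ := piece_bound' hω mIoi mIoc mIoc3 f3 f1 f13 (by norm_num)
  have hS : MeasurableSet (S4 ω) := by
    have ma : Measurable fun q : ℝ × ℝ × ℝ => q.1 := measurable_fst
    have mb : Measurable fun q : ℝ × ℝ × ℝ => q.2.1 := measurable_snd.fst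
    have mc : Measurable fun q : ℝ × ℝ × ℝ => q.2.2 := measurable_snd.snd
    exact (measurableSet_lt measurable_const ma).inter
      ((measurableSet_lt measurable_const mb).inter
      ((measurableSet_lt ((ma.add mb).sub measurable_const) mc).inter
      (measurableSet_lt mc (ma.add mb))))
  refine region_bound f hM hfM hS ?_ p₁ p₂ p₃ ?_
  · rintro q ⟨hωa, hb, hgt, _⟩
    exact ⟨hω.trans hωa, hb, by linarith⟩
  · rintro q ⟨hωa, hb, hgt, hlt⟩
    have ha : 0 < q.1 := hω.trans hωa
    have hc : 0 < q.2.2 := by linarith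
    have n₁ := p₁.2.1 q
    have n₂ := p₂.2.1 q
    have n₃ := p₃.2.1 q
    simp only [pw]
    rcases le_or_gt ω q.2.1 with hbw | hbw
    · have hmem : q ∈ Ioi ω ×ˢ Ioi (ω/2) ×ˢ Ioi ω :=
        ⟨hωa, Set.mem_Ioi.mpr (by linarith), Set.mem_Ioi.mpr (by linarith)⟩
      have e₁ : ind3 (Ioi ω) (Ioi (ω/2)) (Ioi ω) (gw ω) g76 g76 q
          = gw ω q.1 * g76 q.2.1 * g76 q.2.2 := ind3_mem hmem
      have hsd : mkern q ≤ Real.sqrt ω :=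
        (mkern_le_sd q).trans (Real.sqrt_le_sqrt (by linarith))
      have h0 : (0:ℝ) ≤ q.1 ^ (-(7:ℝ)/6) * q.2.1 ^ (-(7:ℝ)/6) * q.2.2 ^ (-(7:ℝ)/6) := by
        positivity
      have hle : mkern q * (q.1 ^ (-(7:ℝ)/6) * q.2.1 ^ (-(7:ℝ)/6) * q.2.2 ^ (-(7:ℝ)/6))
          ≤ gw ω q.1 * g76 q.2.1 * g76 q.2.2 := by
        calc mkern q * (q.1 ^ (-(7:ℝ)/6) * q.2.1 ^ (-(7:ℝ)/6) * q.2.2 ^ (-(7:ℝ)/6))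
            ≤ Real.sqrt ω * (q.1 ^ (-(7:ℝ)/6) * q.2.1 ^ (-(7:ℝ)/6) * q.2.2 ^ (-(7:ℝ)/6)) :=
              mul_le_mul_of_nonneg_right hsd h0
          _ = gw ω q.1 * g76 q.2.1 * g76 q.2.2 := by unfold gw g76; ring
      linarith
    · rcases le_or_gt (2*ω) q.1 with haw | haw
      · have hmem : q ∈ Ioi ω ×ˢ Ioc (0:ℝ) ω ×ˢ Ioi ω :=
          ⟨hωa, ⟨hb, hbw.le⟩, Set.mem_Ioi.mpr (by linarith)⟩
        have e₂ : ind3 (Ioi ω) (Ioc 0 ω) (Ioi ω) g76 g23 g76 q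
            = g76 q.1 * g23 q.2.1 * g76 q.2.2 := ind3_mem hmem
        have hle : mkern q * (q.1 ^ (-(7:ℝ)/6) * q.2.1 ^ (-(7:ℝ)/6) * q.2.2 ^ (-(7:ℝ)/6))
            ≤ g76 q.1 * g23 q.2.1 * g76 q.2.2 :=
          dom_gen ha hb hc (bnd_b q) (by norm_num) (by norm_num) (by norm_num)
        linarith
      · have hmem : q ∈ Ioi ω ×ˢ Ioc (0:ℝ) ω ×ˢ Ioc (0:ℝ) (3*ω) :=
          ⟨hωa, ⟨hb, hbw.le⟩, ⟨hc, by linarith⟩⟩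
        have e₃ : ind3 (Ioi ω) (Ioc 0 ω) (Ioc 0 (3*ω)) g76 g1112 g1112 q
            = g76 q.1 * g1112 q.2.1 * g1112 q.2.2 := ind3_mem hmem
        have hle : mkern q * (q.1 ^ (-(7:ℝ)/6) * q.2.1 ^ (-(7:ℝ)/6) * q.2.2 ^ (-(7:ℝ)/6))
            ≤ g76 q.1 * g1112 q.2.1 * g1112 q.2.2 :=
          dom_gen ha hb hc (bnd_bc q hb.le hc.le) (by norm_num) (by norm_num) (by norm_num)
        linarith

lemma jm_bound (f : ℝ → ℝ) {M : ℝ} (hM : 0 ≤ M)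
    (hfM : ∀ ω > (0:ℝ), ω ^ (7/6 : ℝ) * |f ω| ≤ M) {ω : ℝ} (hω : 0 < ω) :
    |JM f ω| ≤ 559872 * M ^ 3 := by
  have b1 := bound_S1 f hM hfM hω
  have b2 := bound_S2 f hM hfM hω
  have b3 := bound_S3 f hM hfM hω
  have b4 := bound_S4 f hM hfM hω
  have tri : ∀ x y : ℝ, |x - y| ≤ |x| + |y| := fun x y => by
    rw [sub_eq_add_neg]
    exact (abs_add_le x (-y)).trans_eq (by rw [abs_neg])
  unfold JM
  calc |Jint f (S1 ω) + Jint f (S2 ω) - Jint f (S3 ω) - Jint f (S4 ω)|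
      ≤ |Jint f (S1 ω) + Jint f (S2 ω) - Jint f (S3 ω)| + |Jint f (S4 ω)| := tri _ _
    _ ≤ |Jint f (S1 ω) + Jint f (S2 ω)| + |Jint f (S3 ω)| + |Jint f (S4 ω)| := by
        linarith [tri (Jint f (S1 ω) + Jint f (S2 ω)) (Jint f (S3 ω))]
    _ ≤ |Jint f (S1 ω)| + |Jint f (S2 ω)| + |Jint f (S3 ω)| + |Jint f (S4 ω)| := by
        linarith [abs_add_le (Jint f (S1 ω)) (Jint f (S2 ω))]
    _ ≤ 559872 * M ^ 3 := by linarith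

/-- For f ∈ E_{7/6,7/6}, the mass flux is uniformly bounded and the energy flux grows
at most linearly, both by C‖f‖³. -/
theorem stmt_10 :
    ∃ C > (0:ℝ), ∀ (f : ℝ → ℝ) (M : ℝ), Measurable f → 0 ≤ M →
      (∀ ω > (0:ℝ), ω ^ (7/6 : ℝ) * |f ω| ≤ M) →
      ∀ ω > (0:ℝ), |JM f ω| ≤ C * M ^ 3 ∧ |JE f ω| ≤ C * M ^ 3 * ω := by
  refine ⟨1200000, by norm_num, fun f M _ hM hfM ω hω => ?_⟩
  have hJM := jm_bound f hM hfM hω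
  have hM3 : (0:ℝ) ≤ M ^ 3 := by positivity
  constructor
  · calc |JM f ω| ≤ 559872 * M ^ 3 := hJM
      _ ≤ 1200000 * M ^ 3 := by nlinarith
  · -- bound the integral term
    have hIb : |∫ σ in Set.Ioo (0:ℝ) ω, JM f σ| ≤ 559872 * M ^ 3 * ω := by
      have h1 : |∫ σ in Set.Ioo (0:ℝ) ω, JM f σ| ≤ ∫ σ in Set.Ioo (0:ℝ) ω, |JM f σ| := by
        simpa only [Real.norm_eq_abs] using
          norm_integral_le_integral_norm (μ := volume.restrict (Set.Ioo (0:ℝ) ω)) (f := JM f)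
      have hconst : IntegrableOn (fun _ : ℝ => (559872 * M ^ 3 : ℝ)) (Set.Ioo (0:ℝ) ω) volume :=
        integrableOn_const measure_Ioo_lt_top.ne
      have h2 : (∫ σ in Set.Ioo (0:ℝ) ω, |JM f σ|)
          ≤ ∫ _ in Set.Ioo (0:ℝ) ω, (559872 * M ^ 3 : ℝ) := by
        apply integral_mono_of_nonneg (ae_of_all _ fun σ => abs_nonneg _) hconst
        refine (ae_restrict_iff' measurableSet_Ioo).2 (ae_of_all _ fun σ hσ => ?_)
        exact jm_bound f hM hfM hσ.1
      have h3 : (∫ _ in Set.Ioo (0:ℝ) ω, (559872 * M ^ 3 : ℝ)) = 559872 * M ^ 3 * ω := by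
        simp [Real.volume_Ioo, ENNReal.toReal_ofReal hω.le]
        rw [max_eq_left hω.le]
        ring
      linarith
    unfold JE
    have tri : |ω * JM f ω - ∫ σ in Set.Ioo (0:ℝ) ω, JM f σ|
        ≤ |ω * JM f ω| + |∫ σ in Set.Ioo (0:ℝ) ω, JM f σ| := by
      rw [sub_eq_add_neg]
      exact (abs_add_le _ _).trans_eq (by rw [abs_neg])
    have h4 : |ω * JM f ω| = ω * |JM f ω| := by
      rw [abs_mul, abs_of_nonneg hω.le]
    have h5 : ω * |JM f ω| ≤ ω * (559872 * M ^ 3) := mul_le_mul_of_nonneg_left hJM hω.le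
    calc |ω * JM f ω - ∫ σ in Set.Ioo (0:ℝ) ω, JM f σ|
        ≤ |ω * JM f ω| + |∫ σ in Set.Ioo (0:ℝ) ω, JM f σ| := tri
      _ ≤ ω * (559872 * M ^ 3) + 559872 * M ^ 3 * ω := by
          rw [h4]; linarith
      _ ≤ 1200000 * M ^ 3 * ω := by nlinarith
end

section
/- Let f(ω) = ω^{-7/6} and let J_M(f)(ω) be the mass flux of the kinetic wave equation. Then J_M(f)(ω) is independent of ω: J_M(f)(ω) = J_M(f)(1) for all ω > 0. Consequently, the energy flux J_E(f)(ω) = ω J_M(f)(ω) − ∫₀^ω J_M(f)(σ)dσ vanishes identically. -/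
open MeasureTheory Set

/-! Auxiliary machinery for the scaling argument. -/

instance volume_prod_haar2 : (volume : Measure (ℝ × ℝ)).IsAddHaarMeasure :=
  Measure.prod.instIsAddHaarMeasure _ _

instance volume_prod_haar3 : (volume : Measure (ℝ × ℝ × ℝ)).IsAddHaarMeasure :=
  Measure.prod.instIsAddHaarMeasure _ _

/-- The integrand of `Jint` for the KZ spectrum. -/
noncomputable def gKZ : ℝ × ℝ × ℝ → ℝ := fun q =>
  Real.sqrt q.1 * W q.1 q.2.1 q.2.2 (q.1 + q.2.1 - q.2.2) *
    q.1 ^ (-(7:ℝ)/6) * q.2.1 ^ (-(7:ℝ)/6) * q.2.2 ^ (-(7:ℝ)/6)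

lemma W_smul {ω : ℝ} (hω : 0 < ω) (a b c d : ℝ) :
    W (ω * a) (ω * b) (ω * c) (ω * d) = W a b c d := by
  have hs : Real.sqrt ω ≠ 0 := by positivity
  unfold W
  rw [Real.sqrt_mul hω.le, Real.sqrt_mul hω.le, Real.sqrt_mul hω.le, Real.sqrt_mul hω.le,
    ← mul_min_of_nonneg _ _ (Real.sqrt_nonneg ω), ← mul_min_of_nonneg _ _ (Real.sqrt_nonneg ω),
    ← mul_min_of_nonneg _ _ (Real.sqrt_nonneg ω), mul_div_mul_left _ _ hs]

lemma gKZ_smul {ω : ℝ} (hω : 0 < ω) {q : ℝ × ℝ × ℝ}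
    (h1 : 0 < q.1) (h2 : 0 < q.2.1) (h3 : 0 < q.2.2) :
    gKZ (ω • q) = (ω ^ 3)⁻¹ * gKZ q := by
  set p : ℝ := -(7:ℝ)/6 with hp
  have key : Real.sqrt ω * ω ^ p * ω ^ p * ω ^ p = (ω ^ 3)⁻¹ := by
    rw [Real.sqrt_eq_rpow, ← Real.rpow_add hω, ← Real.rpow_add hω, ← Real.rpow_add hω,
      show (1:ℝ)/2 + p + p + p = -(3:ℕ) by rw [hp]; push_cast; ring,
      Real.rpow_neg hω.le, Real.rpow_natCast]
  simp only [gKZ, Prod.smul_fst, Prod.smul_snd, smul_eq_mul]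
  rw [show ω * q.1 + ω * q.2.1 - ω * q.2.2 = ω * (q.1 + q.2.1 - q.2.2) by ring,
    W_smul hω, Real.sqrt_mul hω.le, Real.mul_rpow hω.le h1.le, Real.mul_rpow hω.le h2.le,
    Real.mul_rpow hω.le h3.le, ← key]
  ring

lemma mem_S1_smul {ω : ℝ} (hω : 0 < ω) (x : ℝ × ℝ × ℝ) : ω • x ∈ S1 ω ↔ x ∈ S1 1 := by
  simp only [S1, mem_setOf_eq, Prod.smul_fst, Prod.smul_snd, smul_eq_mul]
  rw [show ω * x.1 + ω * x.2.1 = ω * (x.1 + x.2.1) by ring]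
  simp [mul_pos_iff_of_pos_left hω, mul_lt_iff_lt_one_right hω, lt_mul_iff_one_lt_right hω,
    mul_lt_mul_iff_right₀ hω]

lemma mem_S2_smul {ω : ℝ} (hω : 0 < ω) (x : ℝ × ℝ × ℝ) : ω • x ∈ S2 ω ↔ x ∈ S2 1 := by
  simp only [S2, mem_setOf_eq, Prod.smul_fst, Prod.smul_snd, smul_eq_mul]
  rw [show ω - ω * x.1 = ω * (1 - x.1) by ring,
    show ω * x.1 + ω * x.2.1 - ω = ω * (x.1 + x.2.1 - 1) by ring]
  simp [mul_pos_iff_of_pos_left hω, mul_lt_iff_lt_one_right hω, mul_lt_mul_iff_right₀ hω]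

lemma mem_S3_smul {ω : ℝ} (hω : 0 < ω) (x : ℝ × ℝ × ℝ) : ω • x ∈ S3 ω ↔ x ∈ S3 1 := by
  simp only [S3, mem_setOf_eq, Prod.smul_fst, Prod.smul_snd, smul_eq_mul]
  simp [mul_pos_iff_of_pos_left hω, mul_lt_iff_lt_one_right hω, lt_mul_iff_one_lt_right hω]

lemma mem_S4_smul {ω : ℝ} (hω : 0 < ω) (x : ℝ × ℝ × ℝ) : ω • x ∈ S4 ω ↔ x ∈ S4 1 := by
  simp only [S4, mem_setOf_eq, Prod.smul_fst, Prod.smul_snd, smul_eq_mul]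
  rw [show ω * x.1 + ω * x.2.1 - ω = ω * (x.1 + x.2.1 - 1) by ring,
    show ω * x.1 + ω * x.2.1 = ω * (x.1 + x.2.1) by ring]
  simp [mul_pos_iff_of_pos_left hω, lt_mul_iff_one_lt_right hω, mul_lt_mul_iff_right₀ hω]

lemma pos_S1 {q : ℝ × ℝ × ℝ} (h : q ∈ S1 1) : 0 < q.1 ∧ 0 < q.2.1 ∧ 0 < q.2.2 := by
  obtain ⟨h1, h2, h3, h4, h5⟩ := h; exact ⟨h1, h2, by linarith⟩

lemma pos_S2 {q : ℝ × ℝ × ℝ} (h : q ∈ S2 1) : 0 < q.1 ∧ 0 < q.2.1 ∧ 0 < q.2.2 := by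
  obtain ⟨h1, h2, h3, h4, h5⟩ := h; exact ⟨h1, by linarith, h4⟩

lemma pos_S3 {q : ℝ × ℝ × ℝ} (h : q ∈ S3 1) : 0 < q.1 ∧ 0 < q.2.1 ∧ 0 < q.2.2 := by
  obtain ⟨h1, h2, h3, h4⟩ := h; exact ⟨h1, by linarith, h3⟩

lemma pos_S4 {q : ℝ × ℝ × ℝ} (h : q ∈ S4 1) : 0 < q.1 ∧ 0 < q.2.1 ∧ 0 < q.2.2 := by
  obtain ⟨h1, h2, h3, h4⟩ := h; exact ⟨by linarith, h2, by linarith⟩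

private lemma c1 : Continuous fun q : ℝ × ℝ × ℝ => q.1 := continuous_fst
private lemma c2 : Continuous fun q : ℝ × ℝ × ℝ => q.2.1 := continuous_fst.comp continuous_snd
private lemma c3 : Continuous fun q : ℝ × ℝ × ℝ => q.2.2 := continuous_snd.comp continuous_snd

lemma measurableSet_S1 (ω : ℝ) : MeasurableSet (S1 ω) :=
  (((isOpen_lt continuous_const c1).inter ((isOpen_lt continuous_const c2).inter
    ((isOpen_lt c2 continuous_const).inter ((isOpen_lt continuous_const c3).inter
    (isOpen_lt c3 (c1.add c2)))))).measurableSet)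

lemma measurableSet_S2 (ω : ℝ) : MeasurableSet (S2 ω) :=
  (((isOpen_lt continuous_const c1).inter ((isOpen_lt c1 continuous_const).inter
    ((isOpen_lt (continuous_const.sub c1) c2).inter ((isOpen_lt continuous_const c3).inter
    (isOpen_lt c3 ((c1.add c2).sub continuous_const)))))).measurableSet)

lemma measurableSet_S3 (ω : ℝ) : MeasurableSet (S3 ω) :=
  (((isOpen_lt continuous_const c1).inter ((isOpen_lt continuous_const c2).inter
    ((isOpen_lt continuous_const c3).inter (isOpen_lt c3 continuous_const)))).measurableSet)

lemma measurableSet_S4 (ω : ℝ) : MeasurableSet (S4 ω) :=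
  (((isOpen_lt continuous_const c1).inter ((isOpen_lt continuous_const c2).inter
    ((isOpen_lt ((c1.add c2).sub continuous_const) c3).inter
    (isOpen_lt c3 (c1.add c2))))).measurableSet)

lemma Jint_scale {ω : ℝ} (hω : 0 < ω) (Sf : ℝ → Set (ℝ × ℝ × ℝ))
    (hmω : MeasurableSet (Sf ω)) (hm1 : MeasurableSet (Sf 1))
    (hmem : ∀ x, ω • x ∈ Sf ω ↔ x ∈ Sf 1)
    (hpos : ∀ q ∈ Sf 1, 0 < q.1 ∧ 0 < q.2.1 ∧ 0 < q.2.2) :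
    Jint (fun σ => σ ^ (-(7:ℝ)/6)) (Sf ω) = Jint (fun σ => σ ^ (-(7:ℝ)/6)) (Sf 1) := by
  have hc : ((ω : ℝ) ^ 3)⁻¹ ≠ 0 := inv_ne_zero (pow_ne_zero _ hω.ne')
  have hJ : ∀ s : Set (ℝ × ℝ × ℝ), MeasurableSet s →
      Jint (fun σ => σ ^ (-(7:ℝ)/6)) s = ∫ x, s.indicator gKZ x := by
    intro s hs
    rw [Jint, ← integral_indicator hs]
    rfl
  have A := Measure.integral_comp_smul (volume : Measure (ℝ × ℝ × ℝ)) ((Sf ω).indicator gKZ) ω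
  have hpt : ∀ x, (Sf ω).indicator gKZ (ω • x) = (ω ^ 3)⁻¹ * (Sf 1).indicator gKZ x := by
    intro x
    by_cases hx : x ∈ Sf 1
    · rw [indicator_of_mem ((hmem x).2 hx), indicator_of_mem hx,
        gKZ_smul hω (hpos x hx).1 (hpos x hx).2.1 (hpos x hx).2.2]
    · rw [indicator_of_notMem (fun h => hx ((hmem x).1 h)), indicator_of_notMem hx, mul_zero]
  simp only [hpt] at A
  rw [integral_const_mul] at A
  have hfr : Module.finrank ℝ (ℝ × ℝ × ℝ) = 3 := by simp
  rw [hfr, smul_eq_mul, abs_of_pos (by positivity)] at A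
  rw [hJ _ hmω, hJ _ hm1]
  exact (mul_left_cancel₀ hc A).symm

lemma JM_const {ω : ℝ} (hω : 0 < ω) :
    JM (fun σ => σ ^ (-(7:ℝ)/6)) ω = JM (fun σ => σ ^ (-(7:ℝ)/6)) 1 := by
  unfold JM
  rw [Jint_scale hω S1 (measurableSet_S1 ω) (measurableSet_S1 1) (mem_S1_smul hω)
      (fun q hq => pos_S1 hq),
    Jint_scale hω S2 (measurableSet_S2 ω) (measurableSet_S2 1) (mem_S2_smul hω)
      (fun q hq => pos_S2 hq),
    Jint_scale hω S3 (measurableSet_S3 ω) (measurableSet_S3 1) (mem_S3_smul hω)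
      (fun q hq => pos_S3 hq),
    Jint_scale hω S4 (measurableSet_S4 ω) (measurableSet_S4 1) (mem_S4_smul hω)
      (fun q hq => pos_S4 hq)]

/-- For the KZ spectrum f(ω) = ω^{-7/6}, the mass flux is constant in ω and the energy
flux vanishes identically. -/
theorem stmt_11 :
    (∀ ω > (0:ℝ), JM (fun σ => σ ^ (-(7:ℝ)/6)) ω = JM (fun σ => σ ^ (-(7:ℝ)/6)) 1) ∧
    (∀ ω > (0:ℝ), JE (fun σ => σ ^ (-(7:ℝ)/6)) ω = 0) := by
  constructor
  · exact fun ω hω => JM_const hω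
  · intro ω hω
    unfold JE
    rw [setIntegral_congr_fun measurableSet_Ioo
      (fun σ hσ => JM_const (show (0:ℝ) < σ from hσ.1)), setIntegral_const,
      Real.volume_real_Ioo_of_le hω.le, sub_zero, smul_eq_mul, JM_const hω]
    ring
end

section
/- Suppose the flux J : (0,∞) → ℝ of a function f satisfies J(λ) = J(f_{λ^{-1}})(1) where f_λ(ω) = λ^{-7/6} f(ω/λ), f is bounded in E_{7/6,7/6} uniformly, f(ω) = c₀ ω^{-7/6} + o(ω^{-7/6}) as ω → 0, and J is continuous with respect to a.e. convergence of uniformly bounded sequences in E_{7/6,7/6} and is homogeneous cubic. Then lim_{ω→0} J(f)(ω) = c₀³ J(ω^{-7/6})(1). -/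
open Filter Set

/-- Scaling-limit argument: if the flux functional J satisfies the rescaling identity
J(f)(λ) = J(f_{λ⁻¹})(1) with f_λ(ω) = λ^{-7/6} f(ω/λ), f is bounded in E_{7/6,7/6},
f(ω) = c₀ ω^{-7/6} + o(ω^{-7/6}) as ω → 0, J(·)(1) is continuous with respect to
convergence of uniformly bounded sequences in E_{7/6,7/6}, and J is cubic homogeneous,
then J(f)(ω) → c₀³ J(ω^{-7/6})(1) as ω → 0. -/
theorem stmt_12 (J : (ℝ → ℝ) → ℝ → ℝ) (f : ℝ → ℝ) (c₀ M : ℝ)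
    (hscale : ∀ g : ℝ → ℝ, ∀ lam > (0:ℝ),
      J g lam = J (fun ω => lam ^ (7/6 : ℝ) * g (lam * ω)) 1)
    (hbound : ∀ ω > (0:ℝ), ω ^ (7/6 : ℝ) * |f ω| ≤ M)
    (hasymp : Tendsto (fun ω => ω ^ (7/6 : ℝ) * f ω) (nhdsWithin 0 (Ioi 0)) (nhds c₀))
    (hcont : ∀ (g : ℕ → ℝ → ℝ) (g' : ℝ → ℝ) (M' : ℝ),
      (∀ n, ∀ ω > (0:ℝ), ω ^ (7/6 : ℝ) * |g n ω| ≤ M') →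
      (∀ ω > (0:ℝ), ω ^ (7/6 : ℝ) * |g' ω| ≤ M') →
      (∀ ω > (0:ℝ), Tendsto (fun n => g n ω) atTop (nhds (g' ω))) →
      Tendsto (fun n => J (g n) 1) atTop (nhds (J g' 1)))
    (hcubic : ∀ (c : ℝ) (g : ℝ → ℝ), J (fun ω => c * g ω) 1 = c ^ 3 * J g 1) :
    Tendsto (fun ω => J f ω) (nhdsWithin 0 (Ioi 0))
      (nhds (c₀ ^ 3 * J (fun ω => ω ^ (-(7:ℝ)/6)) 1)) := by

  -- |c₀| ≤ M
  have hc0M : |c₀| ≤ M := by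
    have h1 : Tendsto (fun ω => |ω ^ (7/6 : ℝ) * f ω|) (nhdsWithin 0 (Ioi 0)) (nhds |c₀|) :=
      hasymp.abs
    refine le_of_tendsto h1 ?_
    filter_upwards [self_mem_nhdsWithin] with ω hω
    rw [abs_mul, abs_of_nonneg (Real.rpow_nonneg (le_of_lt hω) _)]
    exact hbound ω hω
  -- target limit function
  set g' : ℝ → ℝ := fun ω => c₀ * ω ^ (-(7:ℝ)/6) with hg'
  have hJg' : J g' 1 = c₀ ^ 3 * J (fun ω => ω ^ (-(7:ℝ)/6)) 1 := hcubic c₀ _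
  rw [← hJg']
  rw [tendsto_iff_seq_tendsto]
  intro x hx
  have hxpos : ∀ᶠ n in atTop, x n ∈ Ioi (0:ℝ) := hx self_mem_nhdsWithin
  set y : ℕ → ℝ := fun n => if 0 < x n then x n else 1 with hy
  have hypos : ∀ n, 0 < y n := by
    intro n; by_cases h : 0 < x n <;> simp [hy, h]
  have hyx : ∀ᶠ n in atTop, y n = x n := by
    filter_upwards [hxpos] with n hn
    show (if 0 < x n then x n else 1) = x n
    exact if_pos hn
  have hytend : Tendsto y atTop (nhdsWithin 0 (Ioi 0)) :=
    hx.congr' (hyx.mono fun n h => h.symm)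
  set g : ℕ → ℝ → ℝ := fun n ω => (y n) ^ (7/6 : ℝ) * f (y n * ω) with hg
  have hMle : M ≤ max M |c₀| := le_max_left _ _
  -- uniform bound on g
  have hgb : ∀ n, ∀ ω > (0:ℝ), ω ^ (7/6 : ℝ) * |g n ω| ≤ max M |c₀| := by
    intro n ω hω
    have hyω : 0 < y n * ω := mul_pos (hypos n) hω
    have : ω ^ (7/6 : ℝ) * |g n ω|
        = (y n * ω) ^ (7/6 : ℝ) * |f (y n * ω)| := by
      rw [Real.mul_rpow (le_of_lt (hypos n)) (le_of_lt hω)]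
      rw [abs_mul, abs_of_nonneg (Real.rpow_nonneg (le_of_lt (hypos n)) _)]
      ring
    rw [this]
    exact (hbound _ hyω).trans hMle
  have hg'b : ∀ ω > (0:ℝ), ω ^ (7/6 : ℝ) * |g' ω| ≤ max M |c₀| := by
    intro ω hω
    have hωne : ω ^ (7/6 : ℝ) ≠ 0 := ne_of_gt (Real.rpow_pos_of_pos hω _)
    have : ω ^ (7/6 : ℝ) * |g' ω| = |c₀| := by
      rw [hg']
      rw [abs_mul, abs_of_nonneg (Real.rpow_nonneg (le_of_lt hω) _)]
      have h2 : ω ^ (-(7:ℝ)/6) = (ω ^ (7/6:ℝ))⁻¹ := by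
        rw [show (-(7:ℝ)/6) = -(7/6 : ℝ) by norm_num, Real.rpow_neg (le_of_lt hω)]
      rw [h2]; field_simp
    rw [this]; exact le_max_right _ _
  -- pointwise convergence
  have hgt : ∀ ω > (0:ℝ), Tendsto (fun n => g n ω) atTop (nhds (g' ω)) := by
    intro ω hω
    have hωne : ω ^ (7/6 : ℝ) ≠ 0 := ne_of_gt (Real.rpow_pos_of_pos hω _)
    have hyω : Tendsto (fun n => y n * ω) atTop (nhdsWithin 0 (Ioi 0)) := by
      rw [tendsto_nhdsWithin_iff]
      constructor
      · have := (tendsto_nhdsWithin_iff.mp hytend).1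
        have h2 := this.mul_const ω
        simpa only [zero_mul] using h2
      · exact Eventually.of_forall fun n => mul_pos (hypos n) hω
    have h3 : Tendsto (fun n => (y n * ω) ^ (7/6 : ℝ) * f (y n * ω)) atTop (nhds c₀) :=
      hasymp.comp hyω
    have h4 := h3.const_mul (ω ^ (-(7:ℝ)/6))
    have heq : ∀ n, ω ^ (-(7:ℝ)/6) * ((y n * ω) ^ (7/6 : ℝ) * f (y n * ω)) = g n ω := by
      intro n
      rw [Real.mul_rpow (le_of_lt (hypos n)) (le_of_lt hω)]
      have h2 : ω ^ (-(7:ℝ)/6) = (ω ^ (7/6:ℝ))⁻¹ := by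
        rw [show (-(7:ℝ)/6) = -(7/6 : ℝ) by norm_num, Real.rpow_neg (le_of_lt hω)]
      rw [h2]; field_simp [hg]; ring
    have h5 : Tendsto (fun n => g n ω) atTop (nhds (ω ^ (-(7:ℝ)/6) * c₀)) := by
      refine h4.congr fun n => heq n
    have : g' ω = ω ^ (-(7:ℝ)/6) * c₀ := by rw [hg']; ring
    rw [this]; exact h5
  have hmain := hcont g g' (max M |c₀|) hgb hg'b hgt
  refine hmain.congr' ?_
  filter_upwards [hxpos] with n hn
  have := hscale f (x n) hn
  simp only [Function.comp]
  rw [this]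
  congr 1
  funext ω
  simp only [hg]
  rw [show y n = x n from if_pos hn]
end

section
/- In the restricted case where ω₂ is the minimal frequency: for ω₁ ≥ 1 and weights ρ_{α,β} as above with β_f, β_g, β_h > 1 and β_f + β_g ≠ 5/2, the integral ∫₀^{ω₁} ∫_{ω₂}^{(ω₁+ω₂)/2} √(ω₂/ω₁) · ρ_{g}(ω₃) ρ_{f}(ω₂) dω₃ dω₂ · ρ_h(ω₁) is bounded by a constant times ω₁^{-min(β_f+β_g+β_h−2, β_h+1/2)}. -/
open MeasureTheory Set

open MeasureTheory Set intervalIntegral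

/-- The weight ρ_{α,β}(ω) = ω^{-α} for ω < 1 and ω^{-β} otherwise. -/
noncomputable def rho (α β : ℝ) (ω : ℝ) : ℝ :=
  if ω < 1 then ω ^ (-α) else ω ^ (-β)

lemma rho_nonneg_s14 (α β : ℝ) {x : ℝ} (hx : 0 ≤ x) : 0 ≤ rho α β x := by
  unfold rho; split <;> exact Real.rpow_nonneg hx _

lemma rho_of_lt (α β : ℝ) {x : ℝ} (h : x < 1) : rho α β x = x ^ (-α) := if_pos h

lemma rho_of_ge (α β : ℝ) {x : ℝ} (h : 1 ≤ x) : rho α β x = x ^ (-β) := if_neg (not_lt.2 h)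

lemma measurable_rho (α β : ℝ) : Measurable (rho α β) := by
  unfold rho
  exact Measurable.ite (measurableSet_lt measurable_id measurable_const)
    (by fun_prop) (by fun_prop)

lemma integrableOn_Ioo_zero_one_rpow {r : ℝ} (hr : -1 < r) :
    IntegrableOn (fun x : ℝ => x ^ r) (Ioo 0 1) := by
  have h := intervalIntegrable_rpow' (a := 0) (b := 1) hr
  rw [intervalIntegrable_iff_integrableOn_Ioc_of_le zero_le_one] at h
  exact h.mono_set Ioo_subset_Ioc_self

lemma integral_Ioo_zero_one_rpow {r : ℝ} (hr : -1 < r) :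
    ∫ x in Ioo (0:ℝ) 1, x ^ r = 1/(r+1) := by
  rw [← integral_Ioc_eq_integral_Ioo, ← integral_of_le zero_le_one,
    integral_rpow (Or.inl hr), Real.one_rpow,
    Real.zero_rpow (by linarith : r + 1 ≠ 0)]
  ring

lemma integrableOn_Ico_one_rpow {r b : ℝ} (hb : 1 ≤ b) :
    IntegrableOn (fun x : ℝ => x ^ r) (Ico 1 b) := by
  have hc : ContinuousOn (fun x : ℝ => x ^ r) (Icc 1 b) :=
    ContinuousOn.rpow_const continuousOn_id
      (fun x hx => Or.inl (by simp; intro h; rw [h] at hx; exact absurd hx.1 (by norm_num)))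
  exact (hc.integrableOn_Icc).mono_set Ico_subset_Icc_self

lemma integral_Ico_one_rpow {r b : ℝ} (hb : 1 ≤ b) (hr : r ≠ -1) :
    ∫ x in Ico (1:ℝ) b, x ^ r = (b ^ (r+1) - 1)/(r+1) := by
  rw [integral_Ico_eq_integral_Ioo, ← integral_Ioc_eq_integral_Ioo,
    ← integral_of_le hb,
    integral_rpow
      (Or.inr ⟨hr, by rw [Set.uIcc_of_le hb]; intro h; exact absurd h.1 (by norm_num)⟩),
    Real.one_rpow]

lemma integrableOn_rpow_mul_rho (α β : ℝ) {q b : ℝ} (hq : -1 < q - α) (hb : 1 ≤ b) :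
    IntegrableOn (fun x => x ^ q * rho α β x) (Ioo (0:ℝ) b) := by
  have h1 : IntegrableOn (fun x => x ^ q * rho α β x) (Ioo (0:ℝ) 1) := by
    refine (integrableOn_Ioo_zero_one_rpow hq).congr_fun (fun x hx => ?_) measurableSet_Ioo
    rw [rho_of_lt _ _ hx.2, ← Real.rpow_add hx.1, ← sub_eq_add_neg]
  have h2 : IntegrableOn (fun x => x ^ q * rho α β x) (Ico 1 b) := by
    have hc : ContinuousOn (fun x : ℝ => x ^ q * x ^ (-β)) (Icc 1 b) := by
      apply ContinuousOn.mul <;>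
        exact ContinuousOn.rpow_const continuousOn_id
          (fun x hx => Or.inl (by simp; intro h; rw [h] at hx; exact absurd hx.1 (by norm_num)))
    refine ((hc.integrableOn_Icc).mono_set Ico_subset_Icc_self).congr_fun
      (fun x hx => ?_) measurableSet_Ico
    rw [rho_of_ge _ _ hx.1]
  exact (h1.union h2).mono_set (fun x hx => by
    rcases lt_or_ge x 1 with h | h
    · exact Or.inl ⟨hx.1, h⟩
    · exact Or.inr ⟨h, hx.2⟩)

lemma inner_large (αg βg : ℝ) (hβg : 1 < βg) {x c : ℝ} (hx : 1 ≤ x) :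
    ∫ y in Ioo x c, rho αg βg y ≤ x ^ (1 - βg) / (βg - 1) := by
  have hx0 : (0:ℝ) < x := lt_of_lt_of_le one_pos hx
  have hInt : IntegrableOn (fun y : ℝ => y ^ (-βg)) (Ioi x) :=
    integrableOn_Ioi_rpow_of_lt (by linarith) hx0
  have h1 : ∫ y in Ioo x c, rho αg βg y = ∫ y in Ioo x c, y ^ (-βg) :=
    setIntegral_congr_fun measurableSet_Ioo (fun y hy => rho_of_ge _ _ (le_trans hx hy.1.le))
  rw [h1]
  have h2 : ∫ y in Ioo x c, y ^ (-βg) ≤ ∫ y in Ioi x, y ^ (-βg) := by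
    refine setIntegral_mono_set hInt ?_ ?_
    · filter_upwards [ae_restrict_mem measurableSet_Ioi] with y hy
      exact Real.rpow_nonneg (le_of_lt (hx0.trans hy)) _
    · exact HasSubset.Subset.eventuallyLE (fun y hy => hy.1)
  rw [integral_Ioi_rpow_of_lt (by linarith) hx0] at h2
  calc ∫ y in Ioo x c, y ^ (-βg) ≤ -x ^ (-βg + 1) / (-βg + 1) := h2
    _ = x ^ (1 - βg) / (βg - 1) := by
        rw [show (-βg + 1 : ℝ) = 1 - βg by ring, div_eq_div_iff (by linarith) (by linarith)]
        ring

lemma inner_small (αg βg : ℝ) (hαg1 : αg ≠ 1) (hβg : 1 < βg)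
    {x c : ℝ} (hx : 0 < x) (hx1 : x < 1) :
    ∫ y in Ioo x c, rho αg βg y ≤ (1 + x ^ (1 - αg)) / |1 - αg| + 1 / (βg - 1) := by
  have hIa : IntegrableOn (rho αg βg) (Ioo x 1) := by
    have h : IntegrableOn (fun y : ℝ => y ^ (-αg)) (Icc x 1) :=
      ContinuousOn.integrableOn_Icc (ContinuousOn.rpow_const continuousOn_id
        (fun y hy => Or.inl (ne_of_gt (lt_of_lt_of_le hx hy.1))))
    exact (h.mono_set Ioo_subset_Icc_self).congr_fun
      (fun y hy => (rho_of_lt _ _ hy.2).symm) measurableSet_Ioo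
  have hIb : IntegrableOn (rho αg βg) (Ici 1) := by
    have h : IntegrableOn (fun y : ℝ => y ^ (-βg)) (Ici 1) := by
      rw [integrableOn_Ici_iff_integrableOn_Ioi]
      exact integrableOn_Ioi_rpow_of_lt (by linarith) one_pos
    exact h.congr_fun (fun y hy => (rho_of_ge _ _ hy).symm) measurableSet_Ici
  have hsub : Ioo x c ⊆ Ioo x 1 ∪ Ici 1 := fun y hy => by
    rcases lt_or_ge y 1 with h | h
    · exact Or.inl ⟨hy.1, h⟩
    · exact Or.inr h
  have hnn : 0 ≤ᵐ[volume.restrict (Ioo x 1 ∪ Ici 1)] rho αg βg := by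
    filter_upwards [ae_restrict_mem (measurableSet_Ioo.union measurableSet_Ici)] with y hy
    have hy0 : (0:ℝ) < y := by
      rcases hy with h | h
      · exact hx.trans h.1
      · exact lt_of_lt_of_le one_pos h
    exact rho_nonneg_s14 _ _ hy0.le
  have hmono := setIntegral_mono_set (hIa.union hIb) hnn (HasSubset.Subset.eventuallyLE hsub)
  have hdisj : Disjoint (Ioo x 1) (Ici 1) := by
    rw [Set.disjoint_left]; intro y hy1 hy2; exact absurd hy2 (not_le.2 hy1.2)
  rw [setIntegral_union hdisj measurableSet_Ici hIa hIb] at hmono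
  have hA : (0:ℝ) < |1 - αg| := abs_pos.2 (sub_ne_zero.2 (Ne.symm hαg1))
  have e1 : ∫ y in Ioo x 1, rho αg βg y ≤ (1 + x ^ (1 - αg)) / |1 - αg| := by
    have hval : ∫ y in Ioo x 1, rho αg βg y = (1 - x ^ (1 - αg)) / (1 - αg) := by
      rw [setIntegral_congr_fun measurableSet_Ioo (fun y hy => rho_of_lt _ _ hy.2),
        ← integral_Ioc_eq_integral_Ioo, ← integral_of_le hx1.le,
        integral_rpow
          (Or.inr ⟨by simpa using hαg1, by
            rw [Set.uIcc_of_le hx1.le]; intro h; exact absurd h.1 (not_le.2 hx)⟩),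
        Real.one_rpow, show (-αg + 1 : ℝ) = 1 - αg by ring]
    rw [hval]
    set t := x ^ (1 - αg) with ht
    have ht0 : 0 ≤ t := Real.rpow_nonneg hx.le _
    have habs : |1 - t| ≤ 1 + t := by
      rcases le_total t 1 with h | h
      · rw [abs_of_nonneg (by linarith)]; linarith
      · rw [abs_of_nonpos (by linarith)]; linarith
    calc (1 - t) / (1 - αg) ≤ |(1 - t) / (1 - αg)| := le_abs_self _
      _ = |1 - t| / |1 - αg| := abs_div _ _
      _ ≤ (1 + t) / |1 - αg| := by gcongr
  have e2 : ∫ y in Ici (1:ℝ), rho αg βg y ≤ 1 / (βg - 1) := by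
    have hval : ∫ y in Ici (1:ℝ), rho αg βg y = 1 / (βg - 1) := by
      rw [setIntegral_congr_fun measurableSet_Ici (fun y hy => rho_of_ge _ _ hy),
        integral_Ici_eq_integral_Ioi, integral_Ioi_rpow_of_lt (by linarith) one_pos,
        Real.one_rpow, show (-βg + 1 : ℝ) = -(βg - 1) by ring, div_neg, neg_div, neg_neg]
    exact le_of_eq hval
  linarith

set_option maxHeartbeats 1000000 in
/-- The ω₂-minimal subcase of the trilinear collision estimate: for ω₁ ≥ 1,
∫₀^{ω₁} ∫_{ω₂}^{(ω₁+ω₂)/2} √(ω₂/ω₁) ρ_g(ω₃) ρ_f(ω₂) dω₃ dω₂ · ρ_h(ω₁)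
≲ ω₁^{-min(β_f+β_g+β_h−2, β_h+1/2)}; here p = (ω₂,ω₃). -/
theorem stmt_14 (αf αg αh βf βg βh : ℝ)
    (hαf : 0 ≤ αf ∧ αf < 5/4 ∧ αf ≠ 1)
    (hαg : 0 ≤ αg ∧ αg < 5/4 ∧ αg ≠ 1)
    (hαh : 0 ≤ αh ∧ αh < 5/4 ∧ αh ≠ 1)
    (hβf : 1 < βf) (hβg : 1 < βg) (hβh : 1 < βh)
    (hβfg : βf + βg ≠ 5/2) :
    ∃ C > (0:ℝ), ∀ ω₁ : ℝ, 1 ≤ ω₁ →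
      (∫ p in {p : ℝ × ℝ | 0 < p.1 ∧ p.1 < ω₁ ∧ p.1 < p.2 ∧ p.2 < (ω₁ + p.1) / 2},
          Real.sqrt (p.1 / ω₁) * rho αg βg p.2 * rho αf βf p.1) * rho αh βh ω₁
        ≤ C * ω₁ ^ (-(min (βf + βg + βh - 2) (βh + 1/2))) := by
  obtain ⟨hαf0, hαf54, hαf1⟩ := hαf
  obtain ⟨hαg0, hαg54, hαg1⟩ := hαg
  have hA : (0:ℝ) < |1 - αg| := abs_pos.2 (sub_ne_zero.2 (Ne.symm hαg1))
  have hB : (0:ℝ) < βg - 1 := by linarith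
  have hD : (0:ℝ) < |5/2 - (βf + βg)| := abs_pos.2 (by intro h; apply hβfg; linarith)
  set K1 : ℝ := 1/|1 - αg| + 1/(βg - 1) with hK1
  set K2 : ℝ := 1/|1 - αg| with hK2
  set CA : ℝ := K1 * (1/(3/2 - αf)) + K2 * (1/(5/2 - αf - αg)) with hCA
  set CB : ℝ := (1/(βg - 1)) * (1/|5/2 - (βf + βg)|) with hCB
  have h32 : (0:ℝ) < 3/2 - αf := by linarith
  have h52 : (0:ℝ) < 5/2 - αf - αg := by linarith
  have hK10 : 0 ≤ K1 := add_nonneg (div_nonneg zero_le_one hA.le) (div_nonneg zero_le_one hB.le)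
  have hK20 : 0 ≤ K2 := div_nonneg zero_le_one hA.le
  have hCA0 : 0 ≤ CA := add_nonneg (mul_nonneg hK10 (div_nonneg zero_le_one h32.le))
    (mul_nonneg hK20 (div_nonneg zero_le_one h52.le))
  have hCB0 : 0 ≤ CB := mul_nonneg (div_nonneg zero_le_one hB.le) (div_nonneg zero_le_one hD.le)
  refine ⟨CA + CB + 1, by linarith, fun ω₁ hω₁ => ?_⟩
  have hω₁0 : (0:ℝ) < ω₁ := lt_of_lt_of_le one_pos hω₁
  set m : ℝ := min (βf + βg - 2) (1/2) with hm
  set S : Set (ℝ × ℝ) := {p : ℝ × ℝ | 0 < p.1 ∧ p.1 < ω₁ ∧ p.1 < p.2 ∧ p.2 < (ω₁ + p.1) / 2}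
    with hSdef
  set f : ℝ × ℝ → ℝ := fun p => Real.sqrt (p.1 / ω₁) * rho αg βg p.2 * rho αf βf p.1 with hfdef
  have hsqrt : ∀ x : ℝ, 0 ≤ x → Real.sqrt (x / ω₁) = x ^ ((1:ℝ)/2) * ω₁ ^ (-(1/2):ℝ) := by
    intro x hx
    rw [Real.sqrt_eq_rpow, Real.div_rpow hx hω₁0.le, Real.rpow_neg hω₁0.le, div_eq_mul_inv]
  have hS : MeasurableSet S := by
    have hrepr : S = ({p : ℝ × ℝ | 0 < p.1} ∩ {p : ℝ × ℝ | p.1 < ω₁}) ∩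
        ({p : ℝ × ℝ | p.1 < p.2} ∩ {p : ℝ × ℝ | p.2 < (ω₁ + p.1) / 2}) := by
      ext p; simp only [hSdef, mem_setOf_eq, mem_inter_iff]; tauto
    rw [hrepr]
    exact ((measurableSet_lt measurable_const measurable_fst).inter
      (measurableSet_lt measurable_fst measurable_const)).inter
      ((measurableSet_lt measurable_fst measurable_snd).inter
      (measurableSet_lt measurable_snd (by fun_prop)))
  have hfm : Measurable f := by
    apply Measurable.mul
    apply Measurable.mul
    · exact Real.continuous_sqrt.measurable.comp (measurable_fst.div_const ω₁)
    · exact (measurable_rho αg βg).comp measurable_snd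
    · exact (measurable_rho αf βf).comp measurable_fst
  set Φ1 : ℝ → ℝ :=
    (Ioo (0:ℝ) ω₁).indicator (fun x => x ^ ((1:ℝ)/4) * rho αf βf x * ω₁ ^ (-(1/2):ℝ)) with hΦ1def
  set Φ2 : ℝ → ℝ := (Ioo (0:ℝ) ω₁).indicator (fun y => y ^ ((1:ℝ)/4) * rho αg βg y) with hΦ2def
  have hΦ1 : Integrable Φ1 :=
    IntegrableOn.integrable_indicator
      ((integrableOn_rpow_mul_rho αf βf (q := (1:ℝ)/4) (by linarith) hω₁).mul_const
        (ω₁ ^ (-(1/2):ℝ))) measurableSet_Ioo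
  have hΦ2 : Integrable Φ2 :=
    IntegrableOn.integrable_indicator
      (integrableOn_rpow_mul_rho αg βg (q := (1:ℝ)/4) (by linarith) hω₁) measurableSet_Ioo
  have hbound : ∀ p : ℝ × ℝ, ‖S.indicator f p‖ ≤ Φ1 p.1 * Φ2 p.2 := by
    intro p
    by_cases hp : p ∈ S
    · obtain ⟨h1, h2, h3, h4⟩ := hp
      have hy0 : 0 < p.2 := h1.trans h3
      have hyω : p.2 < ω₁ := by linarith
      have hρg := rho_nonneg_s14 αg βg hy0.le
      have hρf := rho_nonneg_s14 αf βf h1.le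
      have hf0 : 0 ≤ f p := mul_nonneg (mul_nonneg (Real.sqrt_nonneg _) hρg) hρf
      rw [indicator_of_mem (show p ∈ S from ⟨h1, h2, h3, h4⟩), Real.norm_eq_abs,
        abs_of_nonneg hf0, hΦ1def, hΦ2def,
        indicator_of_mem (show p.1 ∈ Ioo (0:ℝ) ω₁ from ⟨h1, h2⟩),
        indicator_of_mem (show p.2 ∈ Ioo (0:ℝ) ω₁ from ⟨hy0, hyω⟩)]
      have hx12 : p.1 ^ ((1:ℝ)/2) ≤ p.1 ^ ((1:ℝ)/4) * p.2 ^ ((1:ℝ)/4) := by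
        have e : p.1 ^ ((1:ℝ)/2) = p.1 ^ ((1:ℝ)/4) * p.1 ^ ((1:ℝ)/4) := by
          rw [← Real.rpow_add h1]; norm_num
        rw [e]
        exact mul_le_mul_of_nonneg_left (Real.rpow_le_rpow h1.le h3.le (by norm_num))
          (Real.rpow_nonneg h1.le _)
      have key := mul_le_mul_of_nonneg_right hx12
        (mul_nonneg (Real.rpow_nonneg hω₁0.le (-(1/2:ℝ))) (mul_nonneg hρg hρf))
      calc f p = p.1 ^ ((1:ℝ)/2) * (ω₁ ^ (-(1/2):ℝ) * (rho αg βg p.2 * rho αf βf p.1)) := by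
            rw [hfdef]; dsimp only; rw [hsqrt p.1 h1.le]; ring
        _ ≤ p.1 ^ ((1:ℝ)/4) * p.2 ^ ((1:ℝ)/4) *
            (ω₁ ^ (-(1/2):ℝ) * (rho αg βg p.2 * rho αf βf p.1)) := key
        _ = p.1 ^ ((1:ℝ)/4) * rho αf βf p.1 * ω₁ ^ (-(1/2):ℝ) *
            (p.2 ^ ((1:ℝ)/4) * rho αg βg p.2) := by ring
    · rw [indicator_of_notMem hp, norm_zero]
      exact mul_nonneg
        (indicator_nonneg (fun x hx => mul_nonneg (mul_nonneg (Real.rpow_nonneg hx.1.le _)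
          (rho_nonneg_s14 _ _ hx.1.le)) (Real.rpow_nonneg hω₁0.le _)) _)
        (indicator_nonneg (fun y hy => mul_nonneg (Real.rpow_nonneg hy.1.le _)
          (rho_nonneg_s14 _ _ hy.1.le)) _)
  have hprod : Integrable (fun p : ℝ × ℝ => Φ1 p.1 * Φ2 p.2) := by
    rw [Measure.volume_eq_prod]; exact hΦ1.mul_prod hΦ2
  have hIntInd : Integrable (S.indicator f) :=
    Integrable.mono' hprod ((hfm.indicator hS).aestronglyMeasurable)
      (Filter.Eventually.of_forall hbound)
  have hIntProd : Integrable (S.indicator f) ((volume : Measure ℝ).prod volume) := by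
    rw [← Measure.volume_eq_prod]; exact hIntInd
  set g : ℝ → ℝ := fun x => ∫ y, S.indicator f (x, y) with hgdef
  have hfub : ∫ p in S, f p = ∫ x, g x := by
    simp only [hgdef]
    rw [← MeasureTheory.integral_indicator hS, Measure.volume_eq_prod]
    exact integral_prod _ hIntProd
  have hgInt : Integrable g := hIntProd.integral_prod_left
  have hslice : ∀ x, x ∈ Ioo (0:ℝ) ω₁ → g x =
      (Real.sqrt (x / ω₁) * rho αf βf x) * ∫ y in Ioo x ((ω₁ + x)/2), rho αg βg y := by
    intro x hx
    have hfun : (fun y => S.indicator f (x, y)) =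
        (Ioo x ((ω₁ + x)/2)).indicator
          (fun y => (Real.sqrt (x / ω₁) * rho αf βf x) * rho αg βg y) := by
      funext y
      by_cases hy : y ∈ Ioo x ((ω₁ + x)/2)
      · rw [indicator_of_mem hy,
          indicator_of_mem (show (x, y) ∈ S from ⟨hx.1, hx.2, hy.1, hy.2⟩), hfdef]
        dsimp only
        ring
      · rw [indicator_of_notMem hy, indicator_of_notMem
          (show (x, y) ∉ S from fun hmem => hy ⟨hmem.2.2.1, hmem.2.2.2⟩)]
    simp only [hgdef]
    rw [hfun, MeasureTheory.integral_indicator measurableSet_Ioo, MeasureTheory.integral_const_mul]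
  have hzero : ∀ x, x ∉ Ioo (0:ℝ) ω₁ → g x = 0 := by
    intro x hx
    have hfun : (fun y => S.indicator f (x, y)) = fun _ => (0:ℝ) := by
      funext y
      exact indicator_of_notMem (show (x, y) ∉ S from fun hmem => hx ⟨hmem.1, hmem.2.1⟩) _
    simp only [hgdef]
    rw [hfun, MeasureTheory.integral_zero]
  have hunion : Ioo (0:ℝ) ω₁ = Ioo 0 1 ∪ Ico 1 ω₁ := by
    ext t
    simp only [mem_Ioo, mem_Ico, mem_union]
    constructor
    · rintro ⟨h0, hω⟩
      rcases lt_or_ge t 1 with h | h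
      · exact Or.inl ⟨h0, h⟩
      · exact Or.inr ⟨h, hω⟩
    · rintro (⟨h0, h⟩ | ⟨h, hω⟩)
      · exact ⟨h0, lt_of_lt_of_le h hω₁⟩
      · exact ⟨lt_of_lt_of_le one_pos h, hω⟩
  have hdisj2 : Disjoint (Ioo (0:ℝ) 1) (Ico 1 ω₁) := by
    rw [Set.disjoint_left]; intro t ht1 ht2; exact absurd ht2.1 (not_le.2 ht1.2)
  have hsplit : ∫ x, g x = (∫ x in Ioo (0:ℝ) 1, g x) + ∫ x in Ico (1:ℝ) ω₁, g x := by
    rw [← setIntegral_eq_integral_of_forall_compl_eq_zero hzero, hunion,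
      setIntegral_union hdisj2 measurableSet_Ico hgInt.integrableOn hgInt.integrableOn]
  have hP1 : ∫ x in Ioo (0:ℝ) 1, g x ≤ ω₁ ^ (-(1/2):ℝ) * CA := by
    have hIa : IntegrableOn (fun x : ℝ => x ^ (1/2 - αf)) (Ioo 0 1) :=
      integrableOn_Ioo_zero_one_rpow (by linarith)
    have hIb : IntegrableOn (fun x : ℝ => x ^ (3/2 - αf - αg)) (Ioo 0 1) :=
      integrableOn_Ioo_zero_one_rpow (by linarith)
    have hMint : IntegrableOn (fun x : ℝ =>
        ω₁ ^ (-(1/2):ℝ) * (K1 * x ^ (1/2 - αf) + K2 * x ^ (3/2 - αf - αg))) (Ioo 0 1) :=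
      ((hIa.const_mul K1).add (hIb.const_mul K2)).const_mul _
    have hmaj : ∀ x ∈ Ioo (0:ℝ) 1, g x ≤
        ω₁ ^ (-(1/2):ℝ) * (K1 * x ^ (1/2 - αf) + K2 * x ^ (3/2 - αf - αg)) := by
      intro x hx
      rw [hslice x ⟨hx.1, lt_of_lt_of_le hx.2 hω₁⟩]
      have hinner := inner_small αg βg hαg1 hβg (c := (ω₁ + x)/2) hx.1 hx.2
      have hc1 : 0 ≤ Real.sqrt (x / ω₁) * rho αf βf x :=
        mul_nonneg (Real.sqrt_nonneg _) (rho_nonneg_s14 _ _ hx.1.le)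
      have e1 : x ^ ((1:ℝ)/2) * x ^ (-αf) = x ^ ((1:ℝ)/2 - αf) := by
        have h := (Real.rpow_add hx.1 (1/2) (-αf)).symm
        rwa [show ((1:ℝ)/2 + -αf) = (1:ℝ)/2 - αf by ring] at h
      have e2 : x ^ ((1:ℝ)/2 - αf) * x ^ (1 - αg) = x ^ ((3:ℝ)/2 - αf - αg) := by
        have h := (Real.rpow_add hx.1 (1/2 - αf) (1 - αg)).symm
        rwa [show ((1:ℝ)/2 - αf + (1 - αg)) = (3:ℝ)/2 - αf - αg by ring] at h
      calc (Real.sqrt (x / ω₁) * rho αf βf x) * ∫ y in Ioo x ((ω₁ + x)/2), rho αg βg y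
          ≤ (Real.sqrt (x / ω₁) * rho αf βf x) *
            ((1 + x ^ (1 - αg)) / |1 - αg| + 1/(βg - 1)) :=
            mul_le_mul_of_nonneg_left hinner hc1
        _ = ω₁ ^ (-(1/2):ℝ) * (K1 * x ^ (1/2 - αf) + K2 * x ^ (3/2 - αf - αg)) := by
            rw [hsqrt x hx.1.le, rho_of_lt αf βf hx.2, hK1, hK2,
              show (1/2 - αf : ℝ) = (1:ℝ)/2 - αf by norm_num,
              show (3/2 - αf - αg : ℝ) = (3:ℝ)/2 - αf - αg by norm_num, ← e2, ← e1]
            field_simp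
            ring
    calc ∫ x in Ioo (0:ℝ) 1, g x
        ≤ ∫ x in Ioo (0:ℝ) 1,
            ω₁ ^ (-(1/2):ℝ) * (K1 * x ^ (1/2 - αf) + K2 * x ^ (3/2 - αf - αg)) :=
          setIntegral_mono_on hgInt.integrableOn hMint measurableSet_Ioo hmaj
      _ = ω₁ ^ (-(1/2):ℝ) * (K1 * (1/(3/2 - αf)) + K2 * (1/(5/2 - αf - αg))) := by
          rw [MeasureTheory.integral_const_mul, MeasureTheory.integral_add (hIa.const_mul K1) (hIb.const_mul K2),
            MeasureTheory.integral_const_mul, MeasureTheory.integral_const_mul,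
            integral_Ioo_zero_one_rpow (by linarith), integral_Ioo_zero_one_rpow (by linarith)]
          ring_nf
      _ = ω₁ ^ (-(1/2):ℝ) * CA := by rw [hCA]
  have hP2 : ∫ x in Ico (1:ℝ) ω₁, g x ≤
      ω₁ ^ (-(1/2):ℝ) * (CB * ω₁ ^ max (5/2 - (βf + βg)) 0) := by
    have hIc : IntegrableOn (fun x : ℝ => x ^ (3/2 - (βf + βg))) (Ico 1 ω₁) :=
      integrableOn_Ico_one_rpow hω₁
    have hMint : IntegrableOn (fun x : ℝ =>
        (ω₁ ^ (-(1/2):ℝ) * (1/(βg - 1))) * x ^ (3/2 - (βf + βg))) (Ico 1 ω₁) :=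
      hIc.const_mul _
    have hmaj : ∀ x ∈ Ico (1:ℝ) ω₁, g x ≤
        (ω₁ ^ (-(1/2):ℝ) * (1/(βg - 1))) * x ^ (3/2 - (βf + βg)) := by
      intro x hx
      have hx0 : (0:ℝ) < x := lt_of_lt_of_le one_pos hx.1
      rw [hslice x ⟨hx0, hx.2⟩]
      have hinner := inner_large αg βg hβg (c := (ω₁ + x)/2) hx.1
      have hc1 : 0 ≤ Real.sqrt (x / ω₁) * rho αf βf x :=
        mul_nonneg (Real.sqrt_nonneg _) (rho_nonneg_s14 _ _ hx0.le)
      have e1 : x ^ ((1:ℝ)/2) * x ^ (-βf) = x ^ ((1:ℝ)/2 - βf) := by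
        have h := (Real.rpow_add hx0 (1/2) (-βf)).symm
        rwa [show ((1:ℝ)/2 + -βf) = (1:ℝ)/2 - βf by ring] at h
      have e2 : x ^ ((1:ℝ)/2 - βf) * x ^ (1 - βg) = x ^ ((3:ℝ)/2 - (βf + βg)) := by
        have h := (Real.rpow_add hx0 (1/2 - βf) (1 - βg)).symm
        rwa [show ((1:ℝ)/2 - βf + (1 - βg)) = (3:ℝ)/2 - (βf + βg) by ring] at h
      calc (Real.sqrt (x / ω₁) * rho αf βf x) * ∫ y in Ioo x ((ω₁ + x)/2), rho αg βg y
          ≤ (Real.sqrt (x / ω₁) * rho αf βf x) * (x ^ (1 - βg) / (βg - 1)) :=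
            mul_le_mul_of_nonneg_left hinner hc1
        _ = (ω₁ ^ (-(1/2):ℝ) * (1/(βg - 1))) * x ^ (3/2 - (βf + βg)) := by
            rw [hsqrt x hx0.le, rho_of_ge αf βf hx.1,
              show (3/2 - (βf + βg) : ℝ) = (3:ℝ)/2 - (βf + βg) by norm_num, ← e2, ← e1]
            field_simp
    calc ∫ x in Ico (1:ℝ) ω₁, g x
        ≤ ∫ x in Ico (1:ℝ) ω₁, (ω₁ ^ (-(1/2):ℝ) * (1/(βg - 1))) * x ^ (3/2 - (βf + βg)) :=
          setIntegral_mono_on hgInt.integrableOn hMint measurableSet_Ico hmaj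
      _ = (ω₁ ^ (-(1/2):ℝ) * (1/(βg - 1))) *
          ((ω₁ ^ (5/2 - (βf + βg)) - 1)/(5/2 - (βf + βg))) := by
          rw [MeasureTheory.integral_const_mul,
            integral_Ico_one_rpow hω₁ (by intro h; apply hβfg; linarith),
            show (3/2 - (βf + βg) + 1 : ℝ) = 5/2 - (βf + βg) by ring]
      _ ≤ (ω₁ ^ (-(1/2):ℝ) * (1/(βg - 1))) *
          (ω₁ ^ max (5/2 - (βf + βg)) 0 / |5/2 - (βf + βg)|) := by
          refine mul_le_mul_of_nonneg_left ?_
            (mul_nonneg (Real.rpow_nonneg hω₁0.le _) (div_nonneg zero_le_one hB.le))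
          have hdne : (5/2 - (βf + βg) : ℝ) ≠ 0 := by intro h; apply hβfg; linarith
          rcases lt_or_gt_of_ne hdne with hneg | hpos
          · rw [max_eq_right hneg.le, abs_of_neg hneg, Real.rpow_zero]
            have h1 : (ω₁ ^ (5/2 - (βf + βg)) - 1)/(5/2 - (βf + βg)) =
                (1 - ω₁ ^ (5/2 - (βf + βg)))/(-(5/2 - (βf + βg))) := by
              rw [div_eq_div_iff hdne (by linarith : (0:ℝ) < -(5/2 - (βf + βg))).ne']
              ring
            rw [h1]
            exact (div_le_div_iff_of_pos_right (by linarith)).mpr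
              (by linarith [Real.rpow_nonneg hω₁0.le (5/2 - (βf + βg))])
          · rw [max_eq_left hpos.le, abs_of_pos hpos]
            exact (div_le_div_iff_of_pos_right hpos).mpr (by linarith)
      _ = ω₁ ^ (-(1/2):ℝ) * (CB * ω₁ ^ max (5/2 - (βf + βg)) 0) := by
          rw [hCB]; ring
  have hm12 : m ≤ 1/2 := by rw [hm]; exact min_le_right _ _
  have hItot : (∫ p in S, f p) ≤ (CA + CB) * ω₁ ^ (-m) := by
    rw [hfub, hsplit]
    have h1 : ω₁ ^ (-(1/2):ℝ) ≤ ω₁ ^ (-m) :=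
      Real.rpow_le_rpow_of_exponent_le hω₁ (by linarith)
    have h2 : ω₁ ^ (-(1/2):ℝ) * ω₁ ^ max (5/2 - (βf + βg)) 0 = ω₁ ^ (-m) := by
      rw [← Real.rpow_add hω₁0]
      congr 1
      rcases le_total (βf + βg - 2) (1/2 : ℝ) with h | h
      · rw [hm, min_eq_left h, max_eq_left (by linarith)]; ring
      · rw [hm, min_eq_right h, max_eq_right (by linarith)]; norm_num
    calc (∫ x in Ioo (0:ℝ) 1, g x) + ∫ x in Ico (1:ℝ) ω₁, g x
        ≤ ω₁ ^ (-(1/2):ℝ) * CA + ω₁ ^ (-(1/2):ℝ) * (CB * ω₁ ^ max (5/2 - (βf + βg)) 0) :=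
          add_le_add hP1 hP2
      _ = CA * ω₁ ^ (-(1/2):ℝ) + CB * (ω₁ ^ (-(1/2):ℝ) * ω₁ ^ max (5/2 - (βf + βg)) 0) := by
          ring
      _ = CA * ω₁ ^ (-(1/2):ℝ) + CB * ω₁ ^ (-m) := by rw [h2]
      _ ≤ CA * ω₁ ^ (-m) + CB * ω₁ ^ (-m) := by
          have := mul_le_mul_of_nonneg_left h1 hCA0; linarith
      _ = (CA + CB) * ω₁ ^ (-m) := by ring
  have hρh : rho αh βh ω₁ = ω₁ ^ (-βh) := rho_of_ge _ _ hω₁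
  have hmin : min (βf + βg + βh - 2) (βh + 1/2) = m + βh := by
    rw [hm, ← min_add_add_right]
    congr 1 <;> ring
  have h3 : ω₁ ^ (-m) * ω₁ ^ (-βh) = ω₁ ^ (-(min (βf + βg + βh - 2) (βh + 1/2))) := by
    rw [← Real.rpow_add hω₁0, hmin]
    congr 1
    ring
  calc (∫ p in S, f p) * rho αh βh ω₁
      ≤ ((CA + CB) * ω₁ ^ (-m)) * rho αh βh ω₁ :=
        mul_le_mul_of_nonneg_right hItot (rho_nonneg_s14 _ _ hω₁0.le)
    _ = (CA + CB) * (ω₁ ^ (-m) * ω₁ ^ (-βh)) := by rw [hρh]; ring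
    _ = (CA + CB) * ω₁ ^ (-(min (βf + βg + βh - 2) (βh + 1/2))) := by rw [h3]
    _ ≤ (CA + CB + 1) * ω₁ ^ (-(min (βf + βg + βh - 2) (βh + 1/2))) :=
        mul_le_mul_of_nonneg_right (by linarith) (Real.rpow_nonneg hω₁0.le _)
end
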